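/- arXiv:1311.3049 — 3 statements merged into one kernel-verified Lean document; each statement's English description precedes it below -/
import Mathlib

section
/- Let G_w be a weighted bicyclic graph of order n that has at least one pendant vertex and whose base is θ(p,l,q) for some admissible p, l, q (p, l, q ≥ 0 with at most one of them zero). Then i_+(G_w) ≥ 2, i_-(G_w) ≥ 2 and i_0(G_w) ≤ n−4. -/
open Matrix

/-- The positive inertia index of a matrix: the number of positive eigenvalues
(counted with multiplicity) if the matrix is Hermitian, and `0` otherwise. -/
noncomputable def posInertia {k 𝕜 : Type*} [RCLike 𝕜] [Fintype k] [DecidableEq k]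
    (A : Matrix k k 𝕜) : ℕ :=
  if h : A.IsHermitian then Fintype.card {i // 0 < h.eigenvalues i} else 0

/-- The negative inertia index of a matrix. -/
noncomputable def negInertia {k 𝕜 : Type*} [RCLike 𝕜] [Fintype k] [DecidableEq k]
    (A : Matrix k k 𝕜) : ℕ :=
  if h : A.IsHermitian then Fintype.card {i // h.eigenvalues i < 0} else 0

/-- The nullity of a matrix: the number of zero eigenvalues. -/
noncomputable def nulInertia {k 𝕜 : Type*} [RCLike 𝕜] [Fintype k] [DecidableEq k]
    (A : Matrix k k 𝕜) : ℕ :=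
  if h : A.IsHermitian then Fintype.card {i // h.eigenvalues i = 0} else 0

/-- A weighted graph: a simple graph together with a symmetric weight function
which is positive on all edges. -/
structure WeightedGraph (V : Type*) where
  G : SimpleGraph V
  w : V → V → ℝ
  symm : ∀ u v : V, w u v = w v u
  pos : ∀ u v : V, G.Adj u v → 0 < w u v

open Classical in
/-- The (weighted) adjacency matrix of a weighted graph. -/
noncomputable def WeightedGraph.adjMatrix {V : Type*} [Fintype V] [DecidableEq V]
    (W : WeightedGraph V) : Matrix V V ℝ :=
  fun a b => if W.G.Adj a b then W.w a b else 0

/-- `i₊`, the number of positive eigenvalues of the adjacency matrix. -/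
noncomputable def WeightedGraph.iPos {V : Type*} [Fintype V] [DecidableEq V]
    (W : WeightedGraph V) : ℕ := posInertia W.adjMatrix

/-- `i₋`, the number of negative eigenvalues of the adjacency matrix. -/
noncomputable def WeightedGraph.iNeg {V : Type*} [Fintype V] [DecidableEq V]
    (W : WeightedGraph V) : ℕ := negInertia W.adjMatrix

/-- `i₀`, the number of zero eigenvalues of the adjacency matrix. -/
noncomputable def WeightedGraph.iNul {V : Type*} [Fintype V] [DecidableEq V]
    (W : WeightedGraph V) : ℕ := nulInertia W.adjMatrix

/-- A weighted graph is bicyclic if its underlying graph is connected and has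
exactly one more edge than vertices. -/
def WeightedGraph.IsBicyclic {V : Type*} [Fintype V] (W : WeightedGraph V) : Prop :=
  W.G.Connected ∧ W.G.edgeSet.ncard = Fintype.card V + 1

/-- The graph has a pendant vertex (a vertex of degree one). -/
def WeightedGraph.HasPendant {V : Type*} (W : WeightedGraph V) : Prop :=
  ∃ x : V, (W.G.neighborSet x).ncard = 1

/-- The graph has no pendant vertices. -/
def WeightedGraph.NoPendant {V : Type*} (W : WeightedGraph V) : Prop :=
  ∀ x : V, (W.G.neighborSet x).ncard ≠ 1

/-- The base of `G` is (isomorphic to) `H`: some induced subgraph of `G` is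
isomorphic to `H`.  (For a bicyclic graph `G` and a bicyclic graph `H` without
pendant vertices this induced subgraph is necessarily the unique base of `G`.) -/
def BaseIsoTo {V B : Type*} (G : SimpleGraph V) (H : SimpleGraph B) : Prop :=
  ∃ S : Set V, Nonempty ((G.induce S) ≃g H)

/-- Vertex labels of the connecting path of `∞(p,l,q)`: the path starts at the
vertex `0` of the first cycle `0, 1, …, p-1`, and its further vertices are
`p, p+1, …`. -/
def pathVert (p j : ℕ) : ℕ := if j = 0 then 0 else p - 1 + j

/-- Vertex labels of the second cycle of `∞(p,l,q)`: it starts at the last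
vertex of the connecting path and continues with `p+l-1, p+l, …`. -/
def infCyc2Vert (p l k : ℕ) : ℕ := if k = 0 then pathVert p (l - 1) else p + l - 2 + k

/-- The edge relation of `∞(p,l,q)` on the vertex labels `0, …, p+q+l-3`:
the first cycle on `0, …, p-1`, the connecting path (on `l` vertices) from the
vertex `0`, and the second cycle attached at the last path vertex. -/
def infinityRel (p l q a b : ℕ) : Prop :=
  (a + 1 < p ∧ b = a + 1) ∨ (a = 0 ∧ b = p - 1) ∨
  (∃ j, j + 1 < l ∧ a = pathVert p j ∧ b = pathVert p (j + 1)) ∨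
  (∃ k, k + 1 < q ∧ a = infCyc2Vert p l k ∧ b = infCyc2Vert p l (k + 1)) ∨
  (a = infCyc2Vert p l 0 ∧ b = infCyc2Vert p l (q - 1))

/-- The graph `∞(p,l,q)`: two vertex-disjoint cycles of lengths `p` and `q`
joined by a path on `l` vertices (whose endpoints are identified with one
vertex on each cycle).  It has `p + q + l - 2` vertices. -/
def infinityGraph (p l q : ℕ) : SimpleGraph (Fin (p + q + l - 2)) :=
  SimpleGraph.fromRel (fun a b => infinityRel p l q a.1 b.1)

/-- The edge relation of one of the three `u,v`-paths of `θ(p,l,q)` having `m`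
internal vertices, the internal vertices being labelled `o, o+1, …, o+m-1`
(`u` is the vertex `0` and `v` is the vertex `1`). -/
def thetaPathRel (m o a b : ℕ) : Prop :=
  if m = 0 then a = 0 ∧ b = 1
  else (a = 0 ∧ b = o) ∨ (∃ i, i + 1 < m ∧ a = o + i ∧ b = o + i + 1) ∨ (a = o + m - 1 ∧ b = 1)

/-- The graph `θ(p,l,q)`: two vertices `u = 0` and `v = 1` joined by three
internally disjoint paths with `p`, `l`, `q` internal vertices respectively.
It has `p + l + q + 2` vertices. -/
def thetaGraph (p l q : ℕ) : SimpleGraph (Fin (p + l + q + 2)) :=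
  SimpleGraph.fromRel (fun a b =>
    thetaPathRel p 2 a.1 b.1 ∨ thetaPathRel l (p + 2) a.1 b.1 ∨
      thetaPathRel q (p + l + 2) a.1 b.1)

/-- The edge set of `G` is exactly the (symmetrized) list `E`. -/
def adjSpec {V : Type*} (G : SimpleGraph V) (E : List (V × V)) : Prop :=
  ∀ a b : V, G.Adj a b ↔ ((a, b) ∈ E ∨ (b, a) ∈ E)

/-- The weighted subgraph induced on a set `S` of vertices. -/
def WeightedGraph.induce {V : Type*} (W : WeightedGraph V) (S : Set V) : WeightedGraph S where
  G := W.G.induce S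
  w := fun a b => W.w a b
  symm := fun a b => W.symm a b
  pos := fun a b h => W.pos a b h

/-- The `k`-th vertex (mod `n`) of a cycle on `Fin n`. -/
def cycVert (n : ℕ) (hn : 0 < n) (k : ℕ) : Fin n := ⟨k % n, Nat.mod_lt _ hn⟩

/-- `W` is the weighted graph `θ(1,1,1)` (i.e. `K_{2,3}`) with parts `{u, v}`
and `{x1, x2, x3}`. -/
def Theta111Shape {V : Type*} (W : WeightedGraph V) (u v x1 x2 x3 : V) : Prop :=
  [u, v, x1, x2, x3].Nodup ∧ (∀ z : V, z ∈ [u, v, x1, x2, x3]) ∧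
    adjSpec W.G [(u, x1), (u, x2), (u, x3), (x1, v), (x2, v), (x3, v)]

/-- `W` is the weighted graph `θ(1,0,1)` on vertices `u, v, x1, x2` with edges
`uv, ux1, x1v, ux2, x2v`. -/
def Theta101Shape {V : Type*} (W : WeightedGraph V) (u v x1 x2 : V) : Prop :=
  [u, v, x1, x2].Nodup ∧ (∀ z : V, z ∈ [u, v, x1, x2]) ∧
    adjSpec W.G [(u, v), (u, x1), (x1, v), (u, x2), (x2, v)]

/-- `W` is the weighted graph `θ(1,0,2)` on vertices `u, v, x, y, z` with edges
`uv, ux, xv, uy, yz, zv`. -/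
def Theta102Shape {V : Type*} (W : WeightedGraph V) (u v x y z : V) : Prop :=
  [u, v, x, y, z].Nodup ∧ (∀ t : V, t ∈ [u, v, x, y, z]) ∧
    adjSpec W.G [(u, v), (u, x), (x, v), (u, y), (y, z), (z, v)]

/-- `W` is the weighted graph `θ(2,0,2)` on vertices `u, v, x1, x2, y1, y2`
with edges `uv, ux1, x1x2, x2v, uy1, y1y2, y2v`. -/
def Theta202Shape {V : Type*} (W : WeightedGraph V) (u v x1 x2 y1 y2 : V) : Prop :=
  [u, v, x1, x2, y1, y2].Nodup ∧ (∀ t : V, t ∈ [u, v, x1, x2, y1, y2]) ∧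
    adjSpec W.G [(u, v), (u, x1), (x1, x2), (x2, v), (u, y1), (y1, y2), (y2, v)]

/-- `W` is the weighted graph `θ(1,1,2)` on vertices `u, v, x1, x2, y1, y2`
with edges `ux1, x1v, ux2, x2v, uy1, y1y2, y2v`. -/
def Theta112Shape {V : Type*} (W : WeightedGraph V) (u v x1 x2 y1 y2 : V) : Prop :=
  [u, v, x1, x2, y1, y2].Nodup ∧ (∀ t : V, t ∈ [u, v, x1, x2, y1, y2]) ∧
    adjSpec W.G [(u, x1), (x1, v), (u, x2), (x2, v), (u, y1), (y1, y2), (y2, v)]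

/-- `W` is the weighted graph `∞(3,1,3)`: two triangles sharing the vertex `c`. -/
def Inf313Shape {V : Type*} (W : WeightedGraph V) (c a1 a2 b1 b2 : V) : Prop :=
  [c, a1, a2, b1, b2].Nodup ∧ (∀ t : V, t ∈ [c, a1, a2, b1, b2]) ∧
    adjSpec W.G [(c, a1), (a1, a2), (a2, c), (c, b1), (b1, b2), (b2, c)]

/-- `W` is the weighted graph `∞(3,2,3)`: the triangle `u,x,y` and the triangle
`v,s,t`, joined by the edge `uv`. -/
def Inf323Shape {V : Type*} (W : WeightedGraph V) (u v x y s t : V) : Prop :=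
  [u, v, x, y, s, t].Nodup ∧ (∀ z : V, z ∈ [u, v, x, y, s, t]) ∧
    adjSpec W.G [(u, x), (x, y), (y, u), (v, s), (s, t), (t, v), (u, v)]

/-- `W` is the weighted graph `∞(3,1,4)`: the triangle `c,x,y` and the
quadrilateral `c,z1,z2,z3` sharing the vertex `c`. -/
def Inf314Shape {V : Type*} (W : WeightedGraph V) (c x y z1 z2 z3 : V) : Prop :=
  [c, x, y, z1, z2, z3].Nodup ∧ (∀ t : V, t ∈ [c, x, y, z1, z2, z3]) ∧
    adjSpec W.G [(c, x), (x, y), (y, c), (c, z1), (z1, z2), (z2, z3), (z3, c)]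

/-- `W` is the weighted graph `∞(4,1,4)`: the quadrilaterals `c,x1,x2,x3` and
`c,y1,y2,y3` sharing the vertex `c`. -/
def Inf414Shape {V : Type*} (W : WeightedGraph V) (c x1 x2 x3 y1 y2 y3 : V) : Prop :=
  [c, x1, x2, x3, y1, y2, y3].Nodup ∧ (∀ t : V, t ∈ [c, x1, x2, x3, y1, y2, y3]) ∧
    adjSpec W.G [(c, x1), (x1, x2), (x2, x3), (x3, c), (c, y1), (y1, y2), (y2, y3), (y3, c)]


section InertiaAux

variable {n : Type*} [Fintype n] [DecidableEq n] {A : Matrix n n ℝ}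

private lemma quad_eq_sum (hA : A.IsHermitian) (x : n → ℝ) :
    x ⬝ᵥ A *ᵥ x = ∑ i, hA.eigenvalues i *
      ((star (hA.eigenvectorUnitary : Matrix n n ℝ) *ᵥ x) i) ^ 2 := by
  set U : Matrix n n ℝ := (hA.eigenvectorUnitary : Matrix n n ℝ) with hU
  have hsU : star U = Uᵀ := by
    ext i j; simp [Matrix.star_apply]
  conv_lhs => rw [hA.spectral_theorem, Unitary.conjStarAlgAut_apply]
  rw [← Matrix.mulVec_mulVec, ← Matrix.mulVec_mulVec, dotProduct_mulVec,
    ← Matrix.mulVec_transpose]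
  rw [hsU]
  simp only [dotProduct, Matrix.mulVec_diagonal, Function.comp_apply]
  refine Finset.sum_congr rfl fun i _ => ?_
  have : (RCLike.ofReal (hA.eigenvalues i) : ℝ) = hA.eigenvalues i := rfl
  rw [this]; ring

private lemma le_posInertia_of_posdef (hA : A.IsHermitian) (S : Submodule ℝ (n → ℝ))
    (hS : ∀ x ∈ S, x ≠ 0 → 0 < x ⬝ᵥ A *ᵥ x) :
    Module.finrank ℝ S ≤ posInertia A := by
  classical
  rw [posInertia, dif_pos hA]
  by_contra hlt
  push_neg at hlt
  set U : Matrix n n ℝ := (hA.eigenvectorUnitary : Matrix n n ℝ) with hU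
  set L : (n → ℝ) →ₗ[ℝ] ({i // 0 < hA.eigenvalues i} → ℝ) :=
    { toFun := fun x i => (star U *ᵥ x) i.1
      map_add' := by intro x y; ext i; simp [Matrix.mulVec_add]
      map_smul' := by intro c x; ext i; simp [Matrix.mulVec_smul] } with hL
  set N := LinearMap.ker L with hN
  have hrank : Module.finrank ℝ (LinearMap.range L) + Module.finrank ℝ N
      = Fintype.card n := by
    rw [hN, LinearMap.finrank_range_add_finrank_ker L,
      Module.finrank_fintype_fun_eq_card]
  have hrle : Module.finrank ℝ (LinearMap.range L)
      ≤ Fintype.card {i // 0 < hA.eigenvalues i} := by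
    calc Module.finrank ℝ (LinearMap.range L)
        ≤ Module.finrank ℝ ({i // 0 < hA.eigenvalues i} → ℝ) := Submodule.finrank_le _
      _ = Fintype.card {i // 0 < hA.eigenvalues i} := Module.finrank_fintype_fun_eq_card ℝ
  have hsup : Module.finrank ℝ ↥(S ⊔ N) ≤ Fintype.card n := by
    calc Module.finrank ℝ ↥(S ⊔ N) ≤ Module.finrank ℝ (n → ℝ) := Submodule.finrank_le _
      _ = Fintype.card n := Module.finrank_fintype_fun_eq_card ℝ
  have hinf : 0 < Module.finrank ℝ ↥(S ⊓ N) := by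
    have := Submodule.finrank_sup_add_finrank_inf_eq S N
    omega
  obtain ⟨z, hz⟩ := Module.finrank_pos_iff_exists_ne_zero.mp hinf
  have hzS : (z : n → ℝ) ∈ S := z.2.1
  have hzN : (z : n → ℝ) ∈ N := z.2.2
  have hzne : (z : n → ℝ) ≠ 0 := by
    simpa [Submodule.coe_eq_zero] using hz
  have hpos := hS z hzS hzne
  have hneg : (z : n → ℝ) ⬝ᵥ A *ᵥ (z : n → ℝ) ≤ 0 := by
    rw [quad_eq_sum hA]
    refine Finset.sum_nonpos fun i _ => ?_
    by_cases hp : 0 < hA.eigenvalues i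
    · have : (star U *ᵥ (z : n → ℝ)) i = 0 := congrFun (LinearMap.mem_ker.mp hzN) ⟨i, hp⟩
      rw [this]; simp
    · exact mul_nonpos_of_nonpos_of_nonneg (le_of_not_gt hp) (sq_nonneg _)
  linarith

private lemma le_negInertia_of_negdef (hA : A.IsHermitian) (S : Submodule ℝ (n → ℝ))
    (hS : ∀ x ∈ S, x ≠ 0 → x ⬝ᵥ A *ᵥ x < 0) :
    Module.finrank ℝ S ≤ negInertia A := by
  classical
  rw [negInertia, dif_pos hA]
  by_contra hlt
  push_neg at hlt
  set U : Matrix n n ℝ := (hA.eigenvectorUnitary : Matrix n n ℝ) with hU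
  set L : (n → ℝ) →ₗ[ℝ] ({i // hA.eigenvalues i < 0} → ℝ) :=
    { toFun := fun x i => (star U *ᵥ x) i.1
      map_add' := by intro x y; ext i; simp [Matrix.mulVec_add]
      map_smul' := by intro c x; ext i; simp [Matrix.mulVec_smul] } with hL
  set N := LinearMap.ker L with hN
  have hrank : Module.finrank ℝ (LinearMap.range L) + Module.finrank ℝ N
      = Fintype.card n := by
    rw [hN, LinearMap.finrank_range_add_finrank_ker L,
      Module.finrank_fintype_fun_eq_card]
  have hrle : Module.finrank ℝ (LinearMap.range L)
      ≤ Fintype.card {i // hA.eigenvalues i < 0} := by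
    calc Module.finrank ℝ (LinearMap.range L)
        ≤ Module.finrank ℝ ({i // hA.eigenvalues i < 0} → ℝ) := Submodule.finrank_le _
      _ = Fintype.card {i // hA.eigenvalues i < 0} := Module.finrank_fintype_fun_eq_card ℝ
  have hsup : Module.finrank ℝ ↥(S ⊔ N) ≤ Fintype.card n := by
    calc Module.finrank ℝ ↥(S ⊔ N) ≤ Module.finrank ℝ (n → ℝ) := Submodule.finrank_le _
      _ = Fintype.card n := Module.finrank_fintype_fun_eq_card ℝ
  have hinf : 0 < Module.finrank ℝ ↥(S ⊓ N) := by
    have := Submodule.finrank_sup_add_finrank_inf_eq S N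
    omega
  obtain ⟨z, hz⟩ := Module.finrank_pos_iff_exists_ne_zero.mp hinf
  have hzS : (z : n → ℝ) ∈ S := z.2.1
  have hzN : (z : n → ℝ) ∈ N := z.2.2
  have hzne : (z : n → ℝ) ≠ 0 := by
    simpa [Submodule.coe_eq_zero] using hz
  have hpos := hS z hzS hzne
  have hneg : 0 ≤ (z : n → ℝ) ⬝ᵥ A *ᵥ (z : n → ℝ) := by
    rw [quad_eq_sum hA]
    refine Finset.sum_nonneg fun i _ => ?_
    by_cases hp : hA.eigenvalues i < 0
    · have : (star U *ᵥ (z : n → ℝ)) i = 0 := congrFun (LinearMap.mem_ker.mp hzN) ⟨i, hp⟩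
      rw [this]; simp
    · exact mul_nonneg (le_of_not_gt hp) (sq_nonneg _)
  linarith

private lemma inertia_sum (hA : A.IsHermitian) :
    posInertia A + negInertia A + nulInertia A = Fintype.card n := by
  classical
  rw [posInertia, negInertia, nulInertia, dif_pos hA, dif_pos hA, dif_pos hA]
  rw [Fintype.card_subtype, Fintype.card_subtype, Fintype.card_subtype]
  have d1 : Disjoint (Finset.univ.filter fun i => 0 < hA.eigenvalues i)
      (Finset.univ.filter fun i => hA.eigenvalues i < 0) := by
    simp only [Finset.disjoint_left, Finset.mem_filter]
    rintro i ⟨-, h1⟩ ⟨-, h2⟩; linarith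
  have d2 : Disjoint ((Finset.univ.filter fun i => 0 < hA.eigenvalues i) ∪
      (Finset.univ.filter fun i => hA.eigenvalues i < 0))
      (Finset.univ.filter fun i => hA.eigenvalues i = 0) := by
    simp only [Finset.disjoint_left, Finset.mem_union, Finset.mem_filter]
    rintro i (⟨-, h1⟩ | ⟨-, h1⟩) ⟨-, h2⟩ <;> simp [h2] at h1
  rw [← Finset.card_union_of_disjoint d1, ← Finset.card_union_of_disjoint d2]
  congr 1
  ext i
  simp only [Finset.mem_union, Finset.mem_filter, Finset.mem_univ, true_and]
  constructor
  · intro _; trivial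
  · intro _
    rcases lt_trichotomy (hA.eigenvalues i) 0 with h | h | h <;> tauto

private lemma quad_expand (A : Matrix n n ℝ) (a b x y : n)
    (hsymm : ∀ i j, A i j = A j i)
    (hda : A a a = 0) (hdb : A b b = 0) (hdx : A x x = 0) (hdy : A y y = 0)
    (hz1 : A a x = 0) (hz2 : A b x = 0) (c s t e1 e2 : ℝ) :
    (s • (e1 • (Pi.single a 1 : n → ℝ) + (Pi.single b 1 : n → ℝ))
        + t • (c • (Pi.single x 1 : n → ℝ) + e2 • (Pi.single y 1 : n → ℝ)))
      ⬝ᵥ A *ᵥ (s • (e1 • (Pi.single a 1 : n → ℝ) + (Pi.single b 1 : n → ℝ))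
        + t • (c • (Pi.single x 1 : n → ℝ) + e2 • (Pi.single y 1 : n → ℝ)))
    = 2 * e1 * (A a b) * s^2 + 2 * c * e2 * (A x y) * t^2
      + 2 * (e1 * e2 * A a y + e2 * A b y) * s * t := by
  have hz1' : A x a = 0 := (hsymm x a).trans hz1
  have hz2' : A x b = 0 := (hsymm x b).trans hz2
  have hba : A b a = A a b := hsymm b a
  have hya : A y a = A a y := hsymm y a
  have hyb : A y b = A b y := hsymm y b
  have hyx : A y x = A x y := hsymm y x
  simp only [Matrix.mulVec_add, Matrix.mulVec_smul, Matrix.mulVec_single_one,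
    dotProduct_add, add_dotProduct, smul_dotProduct,
    dotProduct_smul, single_dotProduct, smul_eq_mul, Pi.add_apply,
    Pi.smul_apply, mul_one, Matrix.col_apply, one_mul]
  rw [hda, hdb, hdx, hdy, hz1, hz2, hz1', hz2', hba, hya, hyb, hyx]
  ring

private lemma scalar_pos (w1 w2c r s t : ℝ) (h1 : 0 < w1) (hkey : w1 * w2c = r^2 + 1)
    (hst : ¬(s = 0 ∧ t = 0)) : 0 < 2*w1*s^2 + 2*w2c*t^2 + 2*r*s*t := by
  rcases eq_or_ne t 0 with ht | ht
  · have hs : s ≠ 0 := fun h => hst ⟨h, ht⟩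
    have hs2 : 0 < s^2 := by positivity
    subst ht; nlinarith
  · have ht2 : 0 < t^2 := by positivity
    nlinarith [sq_nonneg (2*w1*s + r*t), sq_nonneg (r*t), sq_nonneg r]

private lemma two_le_inertias (hA : A.IsHermitian) (a b x y : n)
    (hab : a ≠ b) (hax : a ≠ x) (hay : a ≠ y) (hbx : b ≠ x) (hby : b ≠ y) (hxy : x ≠ y)
    (hsymm : ∀ i j, A i j = A j i)
    (hda : A a a = 0) (hdb : A b b = 0) (hdx : A x x = 0) (hdy : A y y = 0)
    (hz1 : A a x = 0) (hz2 : A b x = 0)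
    (hpab : 0 < A a b) (hpxy : 0 < A x y) :
    2 ≤ posInertia A ∧ 2 ≤ negInertia A := by
  classical
  constructor
  · -- positive inertia
    set r : ℝ := A a y + A b y with hr
    set c : ℝ := (r^2 + 1) / (A a b * A x y) with hc
    have hkey : A a b * (c * A x y) = r^2 + 1 := by
      rw [hc]; field_simp
    set v1 : n → ℝ := (1:ℝ) • (Pi.single a 1 : n → ℝ) + (Pi.single b 1 : n → ℝ) with hv1
    set v2 : n → ℝ := c • (Pi.single x 1 : n → ℝ) + (1:ℝ) • (Pi.single y 1 : n → ℝ) with hv2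
    have hli : LinearIndependent ℝ ![v1, v2] := by
      rw [LinearIndependent.pair_iff]
      intro s t hstz
      constructor
      · have := congrFun hstz b
        simpa [hv1, hv2, Pi.single_apply, hab.symm, hbx.symm, hby.symm, hab, hbx, hby]
          using this
      · have := congrFun hstz y
        simpa [hv1, hv2, Pi.single_apply, hay.symm, hby.symm, hxy.symm, hay, hby, hxy]
          using this
    have hposdef : ∀ z ∈ Submodule.span ℝ (Set.range ![v1, v2]), z ≠ 0 →
        0 < z ⬝ᵥ A *ᵥ z := by
      intro z hz hzne
      rw [Submodule.mem_span_range_iff_exists_fun] at hz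
      obtain ⟨co, hco⟩ := hz
      rw [Fin.sum_univ_two] at hco
      simp only [Matrix.cons_val_zero, Matrix.cons_val_one, Matrix.head_cons] at hco
      have hst : ¬(co 0 = 0 ∧ co 1 = 0) := by
        rintro ⟨h0, h1⟩; apply hzne; rw [← hco, h0, h1]; simp
      rw [← hco, hv1, hv2,
        quad_expand A a b x y hsymm hda hdb hdx hdy hz1 hz2 c (co 0) (co 1) 1 1]
      have := scalar_pos (A a b) (c * A x y) (A a y + A b y) (co 0) (co 1) hpab hkey hst
      ring_nf at this ⊢
      linarith
    have hle := le_posInertia_of_posdef hA _ hposdef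
    rwa [finrank_span_eq_card hli, Fintype.card_fin] at hle
  · -- negative inertia
    set r : ℝ := A b y - A a y with hr
    set c : ℝ := (r^2 + 1) / (A a b * A x y) with hc
    have hkey : A a b * (c * A x y) = r^2 + 1 := by
      rw [hc]; field_simp
    set v1 : n → ℝ := (-1:ℝ) • (Pi.single a 1 : n → ℝ) + (Pi.single b 1 : n → ℝ) with hv1
    set v2 : n → ℝ := c • (Pi.single x 1 : n → ℝ) + (-1:ℝ) • (Pi.single y 1 : n → ℝ) with hv2
    have hli : LinearIndependent ℝ ![v1, v2] := by
      rw [LinearIndependent.pair_iff]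
      intro s t hstz
      constructor
      · have := congrFun hstz b
        simpa [hv1, hv2, Pi.single_apply, hab.symm, hbx.symm, hby.symm, hab, hbx, hby]
          using this
      · have := congrFun hstz y
        simpa [hv1, hv2, Pi.single_apply, hay.symm, hby.symm, hxy.symm, hay, hby, hxy]
          using this
    have hnegdef : ∀ z ∈ Submodule.span ℝ (Set.range ![v1, v2]), z ≠ 0 →
        z ⬝ᵥ A *ᵥ z < 0 := by
      intro z hz hzne
      rw [Submodule.mem_span_range_iff_exists_fun] at hz
      obtain ⟨co, hco⟩ := hz
      rw [Fin.sum_univ_two] at hco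
      simp only [Matrix.cons_val_zero, Matrix.cons_val_one, Matrix.head_cons] at hco
      have hst : ¬(co 0 = 0 ∧ co 1 = 0) := by
        rintro ⟨h0, h1⟩; apply hzne; rw [← hco, h0, h1]; simp
      rw [← hco, hv1, hv2,
        quad_expand A a b x y hsymm hda hdb hdx hdy hz1 hz2 c (co 0) (co 1) (-1) (-1)]
      have := scalar_pos (A a b) (c * A x y) (A b y - A a y) (co 0) (co 1) hpab hkey hst
      ring_nf at this ⊢
      linarith
    have hle := le_negInertia_of_negdef hA _ hnegdef
    rwa [finrank_span_eq_card hli, Fintype.card_fin] at hle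

end InertiaAux

/-- a weighted bicyclic graph with pendant vertices whose base is
a `θ`-graph has at least `2` positive and `2` negative eigenvalues, and
nullity at most `n - 4`. -/

theorem stmt6 {V : Type*} [Fintype V] [DecidableEq V] (W : WeightedGraph V)
    (hbic : W.IsBicyclic) (hpend : W.HasPendant)
    (hbase : ∃ p l q : ℕ, p + l ≠ 0 ∧ p + q ≠ 0 ∧ l + q ≠ 0 ∧
      BaseIsoTo W.G (thetaGraph p l q)) :
    2 ≤ W.iPos ∧ 2 ≤ W.iNeg ∧ W.iNul ≤ Fintype.card V - 4 := by
  classical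
  obtain ⟨-, hcount⟩ := hbic
  obtain ⟨x, hx⟩ := hpend
  obtain ⟨y, hy⟩ := Set.ncard_eq_one.mp hx
  have hxy : W.G.Adj x y := by
    rw [← SimpleGraph.mem_neighborSet, hy]; exact rfl
  have hxney : x ≠ y := W.G.ne_of_adj hxy
  have hdegx : W.G.degree x = 1 := by
    rw [← SimpleGraph.card_neighborSet_eq_degree, ← Set.toFinset_card,
      ← Set.ncard_eq_toFinset_card', hx]
  have hdegy : W.G.degree y < Fintype.card V := W.G.degree_lt_card_verts y
  have hnotsub : ¬ (W.G.edgeSet ⊆ W.G.incidenceSet x ∪ W.G.incidenceSet y) := by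
    intro hsub
    have h1 : W.G.edgeSet.ncard ≤ (W.G.incidenceSet x ∪ W.G.incidenceSet y).ncard :=
      Set.ncard_le_ncard hsub (Set.toFinite _)
    have h2 := Set.ncard_union_le (W.G.incidenceSet x) (W.G.incidenceSet y)
    have h3 : (W.G.incidenceSet x).ncard = W.G.degree x := by
      rw [Set.ncard_eq_toFinset_card', Set.toFinset_card,
        SimpleGraph.card_incidenceSet_eq_degree]
    have h4 : (W.G.incidenceSet y).ncard = W.G.degree y := by
      rw [Set.ncard_eq_toFinset_card', Set.toFinset_card,
        SimpleGraph.card_incidenceSet_eq_degree]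
    omega
  obtain ⟨e, he, hne⟩ := Set.not_subset.mp hnotsub
  induction e using Sym2.ind with
  | _ a b =>
  have hadj : W.G.Adj a b := he
  simp only [Set.mem_union, not_or] at hne
  obtain ⟨hnx, hny⟩ := hne
  rw [SimpleGraph.mk'_mem_incidenceSet_iff] at hnx hny
  have hxab : x ≠ a ∧ x ≠ b := by
    have h : ¬(x = a ∨ x = b) := fun h => hnx ⟨hadj, h⟩
    push_neg at h; exact h
  have hyab : y ≠ a ∧ y ≠ b := by
    have h : ¬(y = a ∨ y = b) := fun h => hny ⟨hadj, h⟩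
    push_neg at h; exact h
  have hnadjxa : ¬ W.G.Adj x a := by
    intro h
    have ha : a ∈ W.G.neighborSet x := h
    rw [hy] at ha
    exact hyab.1 (Set.mem_singleton_iff.mp ha).symm
  have hnadjxb : ¬ W.G.Adj x b := by
    intro h
    have hb : b ∈ W.G.neighborSet x := h
    rw [hy] at hb
    exact hyab.2 (Set.mem_singleton_iff.mp hb).symm
  set A := W.adjMatrix with hA
  have hsymm : ∀ i j, A i j = A j i := by
    intro i j
    by_cases h : W.G.Adj i j
    · simp [hA, WeightedGraph.adjMatrix, h, h.symm, W.symm i j]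
    · have h' : ¬ W.G.Adj j i := fun hh => h hh.symm
      simp [hA, WeightedGraph.adjMatrix, h, h']
  have hherm : A.IsHermitian := by
    ext i j
    rw [Matrix.conjTranspose_apply, star_trivial]
    exact hsymm j i
  have hdiag : ∀ i, A i i = 0 := by
    intro i; simp [hA, WeightedGraph.adjMatrix]
  have hAval : ∀ i j, W.G.Adj i j → 0 < A i j := by
    intro i j h
    simpa [hA, WeightedGraph.adjMatrix, h] using W.pos i j h
  have hAz : ∀ i j, ¬ W.G.Adj i j → A i j = 0 := by
    intro i j h; simp [hA, WeightedGraph.adjMatrix, h]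
  have key := two_le_inertias hherm a b x y hadj.ne
    (fun h => hxab.1 h.symm) (fun h => hyab.1 h.symm)
    (fun h => hxab.2 h.symm) (fun h => hyab.2 h.symm) hxney
    hsymm (hdiag a) (hdiag b) (hdiag x) (hdiag y)
    (hAz a x (fun h => hnadjxa h.symm)) (hAz b x (fun h => hnadjxb h.symm))
    (hAval a b hadj) (hAval x y hxy)
  have hsum := inertia_sum hherm (A := A)
  refine ⟨key.1, key.2, ?_⟩
  have h1 : 2 ≤ posInertia A := key.1
  have h2 : 2 ≤ negInertia A := key.2
  show nulInertia A ≤ Fintype.card V - 4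
  omega
end

section
/- Let G_w be a weighted bicyclic graph. Then i_+(G_w) = 1 if and only if G_w is isomorphic as a weighted graph to one of the following: (i) weighted θ(1,1,1) — the complete bipartite graph K_{2,3} with parts {u,v} and {x_1,x_2,x_3} — whose weights satisfy w(ux_1)·w(x_2v) = w(ux_2)·w(x_1v) and w(ux_1)·w(x_3v) = w(ux_3)·w(x_1v); (ii) weighted θ(1,0,1) — vertices u, v, x_1, x_2 with edges uv, ux_1, x_1v, ux_2, x_2v — whose weights satisfy w(ux_1)·w(x_2v) = w(ux_2)·w(x_1v). -/
open Matrix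

set_option linter.unusedSectionVars false
set_option maxHeartbeats 1000000

section Core
variable {n : Type*} [Fintype n] [DecidableEq n]

/-- The quadratic form of a real matrix. -/
def qf (A : Matrix n n ℝ) (z : n → ℝ) : ℝ := z ⬝ᵥ A *ᵥ z

/-- There is a 2-dimensional subspace on which the form is positive definite. -/
def PosPlane (A : Matrix n n ℝ) : Prop :=
  ∃ x y : n → ℝ, ∀ a b : ℝ, ¬(a = 0 ∧ b = 0) → 0 < qf A (a • x + b • y)

lemma qf_eq_sum {A : Matrix n n ℝ} (hA : A.IsHermitian) (z : n → ℝ) :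
    qf A z = ∑ i, hA.eigenvalues i * (z ᵥ* (hA.eigenvectorUnitary : Matrix n n ℝ)) i ^ 2 := by
  set U : Matrix n n ℝ := (hA.eigenvectorUnitary : Matrix n n ℝ) with hU
  have hsp := hA.spectral_theorem
  have hstar : star U = Uᵀ := by
    ext i j; simp [Matrix.conjTranspose_apply]
  have hcoord : ∀ w : n → ℝ, star U *ᵥ w = w ᵥ* U := by
    intro w; ext i
    simp [hstar, Matrix.mulVec, Matrix.vecMul, dotProduct, Matrix.transpose_apply,
      mul_comm]
  calc qf A z = z ⬝ᵥ (U * (diagonal (RCLike.ofReal ∘ hA.eigenvalues) * star U)) *ᵥ z := by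
        rw [qf, ← mul_assoc, ← (show A = U * diagonal (RCLike.ofReal ∘ hA.eigenvalues) * star U from hsp)]
    _ = (z ᵥ* U) ⬝ᵥ (diagonal (RCLike.ofReal ∘ hA.eigenvalues)) *ᵥ (z ᵥ* U) := by
        rw [← mulVec_mulVec, dotProduct_mulVec z U, ← mulVec_mulVec, hcoord]
    _ = ∑ i, hA.eigenvalues i * (z ᵥ* U) i ^ 2 := by
        simp [dotProduct, mulVec_diagonal]
        congr 1; funext i; ring

lemma vecMul_combo (U : Matrix n n ℝ) (a b : ℝ) (x y : n → ℝ) :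
    (a • x + b • y) ᵥ* U = a • (x ᵥ* U) + b • (y ᵥ* U) := by
  rw [Matrix.add_vecMul, Matrix.smul_vecMul, Matrix.smul_vecMul]

lemma col_coord {A : Matrix n n ℝ} (hA : A.IsHermitian) (j : n) :
    (fun v => (hA.eigenvectorUnitary : Matrix n n ℝ) v j) ᵥ* (hA.eigenvectorUnitary : Matrix n n ℝ)
      = fun k => (1 : Matrix n n ℝ) j k := by
  set U : Matrix n n ℝ := (hA.eigenvectorUnitary : Matrix n n ℝ)
  have h1 : star U * U = (1 : Matrix n n ℝ) := Unitary.coe_star_mul_self hA.eigenvectorUnitary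
  funext k
  have := congrFun (congrFun (congrArg (fun M => (M : Matrix n n ℝ)) h1) j) k
  simpa [Matrix.mul_apply, Matrix.conjTranspose_apply, Matrix.vecMul, dotProduct]
    using this

lemma posPlane_of_two {A : Matrix n n ℝ} (hA : A.IsHermitian) {i j : n} (hij : i ≠ j)
    (hi : 0 < hA.eigenvalues i) (hj : 0 < hA.eigenvalues j) : PosPlane A := by
  refine ⟨fun v => (hA.eigenvectorUnitary : Matrix n n ℝ) v i,
          fun v => (hA.eigenvectorUnitary : Matrix n n ℝ) v j, ?_⟩
  intro a b hab
  rw [qf_eq_sum hA, vecMul_combo, col_coord hA, col_coord hA]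
  have hsum : ∑ k, hA.eigenvalues k *
      ((a • (fun k => (1 : Matrix n n ℝ) i k) + b • (fun k => (1 : Matrix n n ℝ) j k)) k) ^ 2
      = hA.eigenvalues i * a ^ 2 + hA.eigenvalues j * b ^ 2 := by
    rw [← Finset.sum_subset (Finset.subset_univ ({i, j} : Finset n))]
    · rw [Finset.sum_pair hij]
      simp [Matrix.one_apply, hij, hij.symm]
    · intro k _ hk
      simp only [Finset.mem_insert, Finset.mem_singleton, not_or] at hk
      simp [Matrix.one_apply, Ne.symm hk.1, Ne.symm hk.2]
  rw [hsum]
  rcases not_and_or.mp hab with ha | hb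
  · have : 0 < hA.eigenvalues i * a ^ 2 := by positivity
    nlinarith [sq_nonneg b, mul_nonneg hj.le (sq_nonneg b)]
  · have : 0 < hA.eigenvalues j * b ^ 2 := by positivity
    nlinarith [mul_nonneg hi.le (sq_nonneg a)]

lemma no_two_pos_of_posPlane {A : Matrix n n ℝ} (hA : A.IsHermitian) (h : PosPlane A)
    (hone : ∀ i j, 0 < hA.eigenvalues i → 0 < hA.eigenvalues j → i = j) : False := by
  obtain ⟨x, y, hxy⟩ := h
  set U : Matrix n n ℝ := (hA.eigenvectorUnitary : Matrix n n ℝ) with hU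
  by_cases hp : ∃ i0, 0 < hA.eigenvalues i0
  · obtain ⟨i0, hi0⟩ := hp
    by_cases h0 : (x ᵥ* U) i0 = 0 ∧ (y ᵥ* U) i0 = 0
    · have h1 := hxy 1 0 (by norm_num)
      have h2 : qf A ((1:ℝ) • x + (0:ℝ) • y) ≤ 0 := by
        rw [qf_eq_sum hA]
        apply Finset.sum_nonpos
        intro k _
        by_cases hk : 0 < hA.eigenvalues k
        · have hki : k = i0 := hone k i0 hk hi0
          rw [vecMul_combo, ← hU]
          have hz : ((1:ℝ) • (x ᵥ* U) + (0:ℝ) • (y ᵥ* U)) k = 0 := by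
            rw [hki]; simp [h0.1]
          rw [hz]
          simp
        · exact mul_nonpos_of_nonpos_of_nonneg (le_of_not_gt hk) (sq_nonneg _)
      linarith
    · have hab : ¬((y ᵥ* U) i0 = 0 ∧ -((x ᵥ* U) i0) = 0) := by
        rintro ⟨ha, hb⟩
        exact h0 ⟨by linarith [neg_eq_zero.mp hb], ha⟩
      have h1 := hxy _ _ hab
      have h2 : qf A (((y ᵥ* U) i0) • x + (-((x ᵥ* U) i0)) • y) ≤ 0 := by
        rw [qf_eq_sum hA]
        apply Finset.sum_nonpos
        intro k _
        by_cases hk : 0 < hA.eigenvalues k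
        · have hki : k = i0 := hone k i0 hk hi0
          rw [vecMul_combo, ← hU]
          have hz : ((y ᵥ* U) i0 • (x ᵥ* U) + (-((x ᵥ* U) i0)) • (y ᵥ* U)) k = 0 := by
            rw [hki]; simp; ring
          rw [hz]
          simp
        · exact mul_nonpos_of_nonpos_of_nonneg (le_of_not_gt hk) (sq_nonneg _)
      linarith
  · push_neg at hp
    have h1 := hxy 1 0 (by norm_num)
    have h2 : qf A ((1:ℝ) • x + (0:ℝ) • y) ≤ 0 := by
      rw [qf_eq_sum hA]
      apply Finset.sum_nonpos
      intro k _
      exact mul_nonpos_of_nonpos_of_nonneg (hp k) (sq_nonneg _)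
    linarith

lemma not_posPlane_of_posInertia_le_one {A : Matrix n n ℝ} (hA : A.IsHermitian)
    (h : posInertia A ≤ 1) : ¬ PosPlane A := by
  intro hp
  refine no_two_pos_of_posPlane hA hp ?_
  intro i j hi hj
  rw [posInertia, dif_pos hA] at h
  have := Fintype.card_le_one_iff.mp h ⟨i, hi⟩ ⟨j, hj⟩
  exact congrArg Subtype.val this

lemma posInertia_eq_one {A : Matrix n n ℝ} (hA : A.IsHermitian)
    (h1 : ∃ z, 0 < qf A z) (h2 : ¬ PosPlane A) : posInertia A = 1 := by
  rw [posInertia, dif_pos hA, Fintype.card_eq_one_iff]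
  obtain ⟨z, hz⟩ := h1
  have hex : ∃ i, 0 < hA.eigenvalues i := by
    by_contra hc
    push_neg at hc
    have : qf A z ≤ 0 := by
      rw [qf_eq_sum hA]
      apply Finset.sum_nonpos
      intro k _
      exact mul_nonpos_of_nonpos_of_nonneg (hc k) (sq_nonneg _)
    linarith
  obtain ⟨i, hi⟩ := hex
  refine ⟨⟨i, hi⟩, ?_⟩
  rintro ⟨j, hj⟩
  ext
  by_contra hne
  exact h2 (posPlane_of_two hA hne hj hi)

lemma not_posPlane_of_null (A : Matrix n n ℝ) (g : (n → ℝ) → ℝ)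
    (hg : ∀ (a b : ℝ) (x y : n → ℝ), g (a • x + b • y) = a * g x + b * g y)
    (h : ∀ z, g z = 0 → qf A z ≤ 0) : ¬ PosPlane A := by
  rintro ⟨x, y, hxy⟩
  by_cases h0 : g x = 0 ∧ g y = 0
  · have h1 := hxy 1 0 (by norm_num)
    have h2 := h ((1:ℝ) • x + (0:ℝ) • y) (by rw [hg]; rw [h0.1, h0.2]; ring)
    linarith
  · have hab : ¬(g y = 0 ∧ -g x = 0) := by
      rintro ⟨ha, hb⟩
      exact h0 ⟨by linarith [neg_eq_zero.mp hb], ha⟩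
    have h1 := hxy _ _ hab
    have h2 := h (g y • x + (-g x) • y) (by rw [hg]; ring)
    linarith

end Core

section Patterns
variable {n : Type*} [Fintype n] [DecidableEq n]

/-- vector supported on four vertices -/
def supp4 (p1 p2 p3 p4 : n) (c1 c2 c3 c4 : ℝ) : n → ℝ := fun v =>
  if v = p1 then c1 else if v = p2 then c2 else if v = p3 then c3 else if v = p4 then c4 else 0

lemma supp4_combo (p1 p2 p3 p4 : n) (c1 c2 c3 c4 d1 d2 d3 d4 a b : ℝ) :
    a • supp4 p1 p2 p3 p4 c1 c2 c3 c4 + b • supp4 p1 p2 p3 p4 d1 d2 d3 d4 =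
      supp4 p1 p2 p3 p4 (a*c1+b*d1) (a*c2+b*d2) (a*c3+b*d3) (a*c4+b*d4) := by
  funext v
  simp only [Pi.add_apply, Pi.smul_apply, supp4, smul_eq_mul]
  split_ifs <;> ring

lemma sum_supp4 (p1 p2 p3 p4 : n) (h12 : p1 ≠ p2) (h13 : p1 ≠ p3) (h14 : p1 ≠ p4)
    (h23 : p2 ≠ p3) (h24 : p2 ≠ p4) (h34 : p3 ≠ p4) (c1 c2 c3 c4 : ℝ) (g : n → ℝ) :
    ∑ j, g j * supp4 p1 p2 p3 p4 c1 c2 c3 c4 j = g p1 * c1 + g p2 * c2 + g p3 * c3 + g p4 * c4 := by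
  rw [← Finset.sum_subset (Finset.subset_univ ({p1, p2, p3, p4} : Finset n))]
  · rw [Finset.sum_insert (by simp [h12, h13, h14]),
      Finset.sum_insert (by simp [h23, h24]), Finset.sum_insert (by simp [h34]),
      Finset.sum_singleton]
    simp [supp4, h12.symm, h13.symm, h14.symm, h23.symm, h24.symm, h34.symm]
    ring
  · intro j _ hj
    simp only [Finset.mem_insert, Finset.mem_singleton, not_or] at hj
    simp [supp4, hj.1, hj.2.1, hj.2.2.1, hj.2.2.2]

lemma qf_supp4 (A : Matrix n n ℝ) (p1 p2 p3 p4 : n) (h12 : p1 ≠ p2) (h13 : p1 ≠ p3)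
    (h14 : p1 ≠ p4) (h23 : p2 ≠ p3) (h24 : p2 ≠ p4) (h34 : p3 ≠ p4) (c1 c2 c3 c4 : ℝ) :
    qf A (supp4 p1 p2 p3 p4 c1 c2 c3 c4) =
      (A p1 p1 * c1 + A p1 p2 * c2 + A p1 p3 * c3 + A p1 p4 * c4) * c1 +
      (A p2 p1 * c1 + A p2 p2 * c2 + A p2 p3 * c3 + A p2 p4 * c4) * c2 +
      (A p3 p1 * c1 + A p3 p2 * c2 + A p3 p3 * c3 + A p3 p4 * c4) * c3 +
      (A p4 p1 * c1 + A p4 p2 * c2 + A p4 p3 * c3 + A p4 p4 * c4) * c4 := by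
  have hmv : ∀ p : n, (A *ᵥ supp4 p1 p2 p3 p4 c1 c2 c3 c4) p =
      A p p1 * c1 + A p p2 * c2 + A p p3 * c3 + A p p4 * c4 := by
    intro p
    rw [Matrix.mulVec, dotProduct,
      sum_supp4 p1 p2 p3 p4 h12 h13 h14 h23 h24 h34 c1 c2 c3 c4 (A p)]
  have : qf A (supp4 p1 p2 p3 p4 c1 c2 c3 c4) =
      ∑ j, (A *ᵥ supp4 p1 p2 p3 p4 c1 c2 c3 c4) j * supp4 p1 p2 p3 p4 c1 c2 c3 c4 j := by
    rw [qf, dotProduct]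
    congr 1; funext j; ring
  rw [this, sum_supp4 p1 p2 p3 p4 h12 h13 h14 h23 h24 h34 c1 c2 c3 c4, hmv, hmv, hmv, hmv]

lemma quad_pos (P Q R a b : ℝ) (hP : 0 < P) (hR : 0 < R) (hD : Q^2 < 4*P*R)
    (hab : ¬(a = 0 ∧ b = 0)) : 0 < P*a^2 + Q*(a*b) + R*b^2 := by
  rcases eq_or_ne b 0 with hb | hb
  · subst hb
    have ha : a ≠ 0 := fun h => hab ⟨h, rfl⟩
    have : 0 < P * a^2 := by positivity
    nlinarith
  · nlinarith [sq_nonneg (2*P*a + Q*b), sq_pos_of_ne_zero hb, mul_pos hP hR]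

end Patterns

section PatternLemmas
variable {n : Type*} [Fintype n] [DecidableEq n]
variable (A : Matrix n n ℝ) (p1 p2 p3 p4 : n)

/-- path p1-p2-p3-p4 -/
lemma posPlane_P4 (hsym : ∀ i j, A i j = A j i) (hd : ∀ i, A i i = 0)
    (h12 : p1 ≠ p2) (h13 : p1 ≠ p3) (h14 : p1 ≠ p4)
    (h23 : p2 ≠ p3) (h24 : p2 ≠ p4) (h34 : p3 ≠ p4)
    (e12 : 0 < A p1 p2) (e23 : 0 < A p2 p3) (e34 : 0 < A p3 p4)
    (e13 : A p1 p3 = 0) (e14 : A p1 p4 = 0) (e24 : A p2 p4 = 0) : PosPlane A := by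
  refine ⟨supp4 p1 p2 p3 p4 1 (A p1 p2) 0 0, supp4 p1 p2 p3 p4 0 (A p2 p3) 1 (A p3 p4), ?_⟩
  intro a b hab
  rw [supp4_combo, qf_supp4 A p1 p2 p3 p4 h12 h13 h14 h23 h24 h34,
    hsym p2 p1, hsym p3 p1, hsym p4 p1, hsym p3 p2, hsym p4 p2, hsym p4 p3,
    hd p1, hd p2, hd p3, hd p4, e13, e14, e24]
  have key : 0 < 2 * ((a * A p1 p2 + b * A p2 p3)^2 + (b * A p3 p4)^2) := by
    by_contra hle
    push_neg at hle
    have h1 : (a * A p1 p2 + b * A p2 p3)^2 = 0 := by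
      nlinarith [sq_nonneg (a * A p1 p2 + b * A p2 p3), sq_nonneg (b * A p3 p4)]
    have h2 : (b * A p3 p4)^2 = 0 := by
      nlinarith [sq_nonneg (a * A p1 p2 + b * A p2 p3), sq_nonneg (b * A p3 p4)]
    have hs0 : a * A p1 p2 + b * A p2 p3 = 0 := by
      exact pow_eq_zero_iff two_ne_zero |>.mp h1
    have ht0 : b * A p3 p4 = 0 := pow_eq_zero_iff two_ne_zero |>.mp h2
    have hb : b = 0 := by
      rcases mul_eq_zero.mp ht0 with h | h
      · exact h
      · exact absurd h (ne_of_gt e34)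
    have ha : a = 0 := by
      rw [hb] at hs0
      have : a * A p1 p2 = 0 := by linarith
      rcases mul_eq_zero.mp this with h | h
      · exact h
      · exact absurd h (ne_of_gt e12)
    exact hab ⟨ha, hb⟩
  exact lt_of_lt_of_eq key (by ring)

/-- two disjoint edges p1-p2, p3-p4 -/
lemma posPlane_2K2 (hsym : ∀ i j, A i j = A j i) (hd : ∀ i, A i i = 0)
    (h12 : p1 ≠ p2) (h13 : p1 ≠ p3) (h14 : p1 ≠ p4)
    (h23 : p2 ≠ p3) (h24 : p2 ≠ p4) (h34 : p3 ≠ p4)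
    (e12 : 0 < A p1 p2) (e34 : 0 < A p3 p4)
    (e13 : A p1 p3 = 0) (e14 : A p1 p4 = 0) (e23 : A p2 p3 = 0) (e24 : A p2 p4 = 0) :
    PosPlane A := by
  refine ⟨supp4 p1 p2 p3 p4 1 (A p1 p2) 0 0, supp4 p1 p2 p3 p4 0 0 1 (A p3 p4), ?_⟩
  intro a b hab
  rw [supp4_combo, qf_supp4 A p1 p2 p3 p4 h12 h13 h14 h23 h24 h34,
    hsym p2 p1, hsym p3 p1, hsym p4 p1, hsym p3 p2, hsym p4 p2, hsym p4 p3,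
    hd p1, hd p2, hd p3, hd p4, e13, e14, e23, e24]
  have key : 0 < 2 * ((a * A p1 p2)^2 + (b * A p3 p4)^2) := by
    by_contra hle
    push_neg at hle
    have h1 : (a * A p1 p2)^2 = 0 := by
      nlinarith [sq_nonneg (a * A p1 p2), sq_nonneg (b * A p3 p4)]
    have h2 : (b * A p3 p4)^2 = 0 := by
      nlinarith [sq_nonneg (a * A p1 p2), sq_nonneg (b * A p3 p4)]
    have ha : a = 0 := by
      rcases mul_eq_zero.mp (pow_eq_zero_iff two_ne_zero |>.mp h1) with h | h
      · exact h
      · exact absurd h (ne_of_gt e12)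
    have hb : b = 0 := by
      rcases mul_eq_zero.mp (pow_eq_zero_iff two_ne_zero |>.mp h2) with h | h
      · exact h
      · exact absurd h (ne_of_gt e34)
    exact hab ⟨ha, hb⟩
  exact lt_of_lt_of_eq key (by ring)

/-- paw: pendant p1 at p2, triangle p2p3p4 -/
lemma posPlane_paw (hsym : ∀ i j, A i j = A j i) (hd : ∀ i, A i i = 0)
    (h12 : p1 ≠ p2) (h13 : p1 ≠ p3) (h14 : p1 ≠ p4)
    (h23 : p2 ≠ p3) (h24 : p2 ≠ p4) (h34 : p3 ≠ p4)
    (e12 : 0 < A p1 p2) (e23 : 0 < A p2 p3) (e24 : 0 < A p2 p4) (e34 : 0 < A p3 p4)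
    (e13 : A p1 p3 = 0) (e14 : A p1 p4 = 0) : PosPlane A := by
  have hβδ : 0 < A p2 p3 + A p2 p4 := by linarith
  have hεpos : 0 < (A p1 p2 * A p3 p4)/(A p2 p3 + A p2 p4)^2 := by positivity
  refine ⟨supp4 p1 p2 p3 p4 1 ((A p1 p2 * A p3 p4)/(A p2 p3 + A p2 p4)^2) 0 0,
          supp4 p1 p2 p3 p4 0 0 1 1, ?_⟩
  intro a b hab
  rw [supp4_combo, qf_supp4 A p1 p2 p3 p4 h12 h13 h14 h23 h24 h34,
    hsym p2 p1, hsym p3 p1, hsym p4 p1, hsym p3 p2, hsym p4 p2, hsym p4 p3,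
    hd p1, hd p2, hd p3, hd p4, e13, e14]
  set ε : ℝ := (A p1 p2 * A p3 p4)/(A p2 p3 + A p2 p4)^2 with hε
  have hQ : (ε*(A p2 p3 + A p2 p4))^2 < 4*(A p1 p2 * ε)*(A p3 p4) := by
    have h1 : ε * (A p2 p3 + A p2 p4)^2 = A p1 p2 * A p3 p4 := by
      rw [hε]; field_simp
    have h2 : (ε*(A p2 p3 + A p2 p4))^2 = ε * (A p1 p2 * A p3 p4) := by
      calc (ε*(A p2 p3 + A p2 p4))^2 = ε * (ε * (A p2 p3 + A p2 p4)^2) := by ring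
        _ = ε * (A p1 p2 * A p3 p4) := by rw [h1]
    rw [h2]
    have h3 : 0 < A p1 p2 * A p3 p4 := by positivity
    nlinarith
  have key := quad_pos (A p1 p2 * ε) (ε*(A p2 p3 + A p2 p4)) (A p3 p4) a b
    (by positivity) e34 hQ hab
  have key2 : 0 < 2*(A p1 p2 * ε * a^2 + ε*(A p2 p3 + A p2 p4)*(a*b) + A p3 p4*b^2) := by
    linarith
  refine lt_of_lt_of_eq key2 ?_
  field_simp
  ring

/-- 4-cycle p1p2p3p4 with possible diagonal p2p4, no diagonal p1p3, and
nondegenerate weights -/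
lemma posPlane_cyc4 (hsym : ∀ i j, A i j = A j i) (hd : ∀ i, A i i = 0)
    (h12 : p1 ≠ p2) (h13 : p1 ≠ p3) (h14 : p1 ≠ p4)
    (h23 : p2 ≠ p3) (h24 : p2 ≠ p4) (h34 : p3 ≠ p4)
    (e12 : 0 < A p1 p2) (e23 : 0 < A p2 p3) (e34 : 0 < A p3 p4) (e41 : 0 < A p1 p4)
    (e13 : A p1 p3 = 0) (e24 : 0 ≤ A p2 p4)
    (hne : A p1 p2 * A p3 p4 ≠ A p2 p3 * A p1 p4) : PosPlane A := by
  have hM0 : (0:ℝ) < A p2 p4 + 1 := by linarith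
  refine ⟨supp4 p1 p2 p3 p4 1 (A p1 p2/(A p2 p4 + 1)) 0 (A p1 p4/(A p2 p4 + 1)),
          supp4 p1 p2 p3 p4 0 (A p2 p3/(A p2 p4 + 1)) 1 (A p3 p4/(A p2 p4 + 1)), ?_⟩
  intro a b hab
  rw [supp4_combo, qf_supp4 A p1 p2 p3 p4 h12 h13 h14 h23 h24 h34,
    hsym p2 p1, hsym p3 p1, hsym p4 p1, hsym p3 p2, hsym p4 p2, hsym p4 p3,
    hd p1, hd p2, hd p3, hd p4, e13]
  have hκ0 : 0 ≤ A p2 p4/(A p2 p4 + 1) := by positivity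
  have hκ1 : A p2 p4/(A p2 p4 + 1) < 1 := by
    rw [div_lt_one hM0]; linarith
  have key : 0 < (2/(A p2 p4 + 1)) * ((a * A p1 p2 + b * A p2 p3)^2
      + (a * A p1 p4 + b * A p3 p4)^2
      + (A p2 p4/(A p2 p4 + 1)) * ((a * A p1 p2 + b * A p2 p3) * (a * A p1 p4 + b * A p3 p4))) := by
    set s : ℝ := a * A p1 p2 + b * A p2 p3 with hs
    set t : ℝ := a * A p1 p4 + b * A p3 p4 with ht
    set κ : ℝ := A p2 p4/(A p2 p4 + 1)
    have hpos : 0 < s^2 + t^2 + κ*(s*t) := by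
      by_contra hle
      push_neg at hle
      have hst : s^2 + t^2 ≤ 0 := by
        nlinarith [mul_nonneg hκ0 (sq_nonneg (s+t)), mul_nonneg hκ0 (sq_nonneg (s-t)),
          sq_nonneg s, sq_nonneg t]
      have hs0 : s = 0 := by nlinarith [sq_nonneg s, sq_nonneg t]
      have ht0 : t = 0 := by nlinarith [sq_nonneg s, sq_nonneg t]
      have ha : a = 0 := by
        have hcomb : a * (A p1 p2 * A p3 p4 - A p2 p3 * A p1 p4)
            = A p3 p4 * s - A p2 p3 * t := by rw [hs, ht]; ring
        have hz : a * (A p1 p2 * A p3 p4 - A p2 p3 * A p1 p4) = 0 := by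
          rw [hcomb, hs0, ht0]; ring
        rcases mul_eq_zero.mp hz with h | h
        · exact h
        · exact absurd (sub_eq_zero.mp h) hne
      have hb : b = 0 := by
        rw [hs, ha] at hs0
        simp only [zero_mul, zero_add] at hs0
        rcases mul_eq_zero.mp hs0 with h | h
        · exact h
        · exact absurd h (ne_of_gt e23)
      exact hab ⟨ha, hb⟩
    positivity
  refine lt_of_lt_of_eq key ?_
  field_simp
  ring

end PatternLemmas

section Graph
variable {V : Type*} [Fintype V] [DecidableEq V] (W : WeightedGraph V)

lemma adjM_of_adj {a b : V} (h : W.G.Adj a b) : W.adjMatrix a b = W.w a b := by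
  simp [WeightedGraph.adjMatrix, h]

lemma adjM_of_nadj {a b : V} (h : ¬ W.G.Adj a b) : W.adjMatrix a b = 0 := by
  simp [WeightedGraph.adjMatrix, h]

lemma adjM_pos {a b : V} (h : W.G.Adj a b) : 0 < W.adjMatrix a b := by
  rw [adjM_of_adj W h]; exact W.pos a b h

lemma adjM_sym : ∀ i j, W.adjMatrix i j = W.adjMatrix j i := by
  intro i j
  by_cases h : W.G.Adj i j
  · rw [adjM_of_adj W h, adjM_of_adj W h.symm, W.symm]
  · rw [adjM_of_nadj W h, adjM_of_nadj W (fun h' => h h'.symm)]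

lemma adjM_diag : ∀ i, W.adjMatrix i i = 0 := fun i =>
  adjM_of_nadj W (W.G.irrefl)

lemma adjM_herm : W.adjMatrix.IsHermitian := by
  ext i j
  simp only [Matrix.conjTranspose_apply, RCLike.star_def, starRingEnd_apply, star_trivial]
  exact adjM_sym W j i

lemma noK2K1 (hconn : W.G.Connected) (hnp : ¬ PosPlane W.adjMatrix) :
    ∀ x y c : V, W.G.Adj x y → c ≠ x → c ≠ y → ¬W.G.Adj c x → ¬W.G.Adj c y → False := by
  intro x y c hxy hcx hcy hnx hny
  have hsym := adjM_sym W
  have hdiag := adjM_diag W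
  obtain ⟨p⟩ := hconn c x
  cases p with
  | nil => exact hcx rfl
  | @cons _ m _ h q =>
    have hcm : c ≠ m := W.G.ne_of_adj h
    have hmx : m ≠ x := by rintro rfl; exact hnx h
    have hmy : m ≠ y := by rintro rfl; exact hny h
    by_cases hma : W.G.Adj m x <;> by_cases hmb : W.G.Adj m y
    · -- paw: pendant c at m, triangle m x y
      exact hnp (posPlane_paw W.adjMatrix c m x y hsym hdiag hcm hcx hcy hmx hmy hxy.ne
        (adjM_pos W h) (adjM_pos W hma) (adjM_pos W hmb) (adjM_pos W hxy)
        (adjM_of_nadj W hnx) (adjM_of_nadj W hny))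
    · -- P4 : y x m c
      exact hnp (posPlane_P4 W.adjMatrix y x m c hsym hdiag (fun h' => hxy.ne h'.symm)
        (Ne.symm hmy) (Ne.symm hcy) (Ne.symm hmx) (Ne.symm hcx) (fun h' => hcm h'.symm)
        (adjM_pos W hxy.symm) (adjM_pos W hma.symm) (adjM_pos W h.symm)
        (adjM_of_nadj W (fun h' => hmb h'.symm)) (adjM_of_nadj W (fun h' => hny h'.symm))
        (adjM_of_nadj W (fun h' => hnx h'.symm)))
    · -- P4 : x y m c
      exact hnp (posPlane_P4 W.adjMatrix x y m c hsym hdiag hxy.ne (Ne.symm hmx)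
        (Ne.symm hcx) (Ne.symm hmy) (Ne.symm hcy) (fun h' => hcm h'.symm)
        (adjM_pos W hxy) (adjM_pos W hmb.symm) (adjM_pos W h.symm)
        (adjM_of_nadj W (fun h' => hma h'.symm)) (adjM_of_nadj W (fun h' => hnx h'.symm))
        (adjM_of_nadj W (fun h' => hny h'.symm)))
    · -- 2K2 : edges x-y and c-m
      exact hnp (posPlane_2K2 W.adjMatrix x y c m hsym hdiag hxy.ne (Ne.symm hcx)
        (Ne.symm hmx) (Ne.symm hcy) (Ne.symm hmy) hcm
        (adjM_pos W hxy) (adjM_pos W h)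
        (adjM_of_nadj W (fun h' => hnx h'.symm)) (adjM_of_nadj W (fun h' => hma h'.symm))
        (adjM_of_nadj W (fun h' => hny h'.symm)) (adjM_of_nadj W (fun h' => hmb h'.symm)))

end Graph

section Forward
variable {V : Type*} [Fintype V] [DecidableEq V]

set_option maxHeartbeats 1000000 in
lemma forward_classification (W : WeightedGraph V) (hconn : W.G.Connected)
    (hcard : W.G.edgeSet.ncard = Fintype.card V + 1)
    (hnp : ¬ PosPlane W.adjMatrix) :
    ((∃ u v x1 x2 x3 : V, Theta111Shape W u v x1 x2 x3 ∧
          W.w u x1 * W.w x2 v = W.w u x2 * W.w x1 v ∧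
          W.w u x1 * W.w x3 v = W.w u x3 * W.w x1 v) ∨
       (∃ u v x1 x2 : V, Theta101Shape W u v x1 x2 ∧
          W.w u x1 * W.w x2 v = W.w u x2 * W.w x1 v)) := by
  classical
  have hsym := adjM_sym W
  have hdiag := adjM_diag W
  have hK := noK2K1 W hconn hnp
  haveI : DecidableRel W.G.Adj := Classical.decRel _
  set n := Fintype.card V with hn
  have hedge : W.G.edgeFinset.card = n + 1 := by
    rw [← hcard, ← SimpleGraph.coe_edgeFinset, Set.ncard_coe_finset]
  have hn4 : 4 ≤ n := by
    have h1 := SimpleGraph.card_edgeFinset_le_card_choose_two (G := W.G)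
    rw [hedge, ← hn] at h1
    by_contra hlt
    push_neg at hlt
    interval_cases n <;> revert h1 <;> decide
  have hdeg : ∑ v : V, W.G.degree v = 2 * (n + 1) := by
    rw [SimpleGraph.sum_degrees_eq_twice_card_edges, hedge]
  have hmin : ∃ v : V, W.G.degree v ≤ 2 := by
    by_contra hc
    push_neg at hc
    have h3 : 3 * n ≤ ∑ v : V, W.G.degree v := by
      calc 3 * n = ∑ _v : V, 3 := by rw [Finset.sum_const, Finset.card_univ, ← hn]; ring
        _ ≤ _ := Finset.sum_le_sum (fun v _ => hc v)
    omega
  obtain ⟨v, hv2⟩ := hmin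
  have hadj : ∀ x : V, ∃ t, W.G.Adj x t := by
    intro x
    have h1 : 1 < n := by omega
    obtain ⟨w0, hw0⟩ := Fintype.exists_ne_of_one_lt_card (by omega) x
    obtain ⟨p⟩ := hconn x w0
    cases p with
    | nil => exact absurd rfl hw0
    | cons h q => exact ⟨_, h⟩
  have hvpos : 0 < W.G.degree v := by
    rw [SimpleGraph.degree_pos_iff_exists_adj]
    exact hadj v
  have hd12 : W.G.degree v = 1 ∨ W.G.degree v = 2 := by omega
  rcases hd12 with hd1 | hd2
  · -- degree-1 vertex: impossible
    exfalso
    obtain ⟨u, hu⟩ := Finset.card_eq_one.mp (hd1 : (W.G.neighborFinset v).card = 1)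
    have hvu : W.G.Adj v u := by
      rw [← SimpleGraph.mem_neighborFinset, hu]; simp
    have honly : ∀ x, W.G.Adj v x → x = u := by
      intro x hx
      have := (SimpleGraph.mem_neighborFinset W.G v x).mpr hx
      rw [hu] at this; simpa using this
    have hin : W.G.edgeFinset ⊆ W.G.incidenceFinset u := by
      intro e he
      rw [SimpleGraph.mem_edgeFinset] at he
      rw [SimpleGraph.mem_incidenceFinset]
      induction e with
      | h x y =>
        refine ⟨he, ?_⟩
        rw [Sym2.mem_iff]
        by_contra hc
        push_neg at hc
        have hxy : W.G.Adj x y := he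
        have hvx : v ≠ x := by
          rintro rfl
          exact hc.2 (honly y hxy).symm
        have hvy : v ≠ y := by
          rintro rfl
          exact hc.1 (honly x hxy.symm).symm
        have hnx : ¬ W.G.Adj v x := fun h => hc.1 (honly x h).symm
        have hny : ¬ W.G.Adj v y := fun h => hc.2 (honly y h).symm
        exact hK x y v hxy hvx hvy hnx hny
    have h1 : n + 1 ≤ W.G.degree u := by
      rw [← SimpleGraph.card_incidenceFinset_eq_degree, ← hedge]
      exact Finset.card_le_card hin
    have h2 := SimpleGraph.degree_lt_card_verts (G := W.G) u
    omega
  · obtain ⟨a, b, hab, hnbr⟩ := Finset.card_eq_two.mp (hd2 : (W.G.neighborFinset v).card = 2)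
    have hva : W.G.Adj v a := by rw [← SimpleGraph.mem_neighborFinset, hnbr]; simp
    have hvb : W.G.Adj v b := by rw [← SimpleGraph.mem_neighborFinset, hnbr]; simp
    have hmem : ∀ x, W.G.Adj v x ↔ (x = a ∨ x = b) := by
      intro x
      rw [← SimpleGraph.mem_neighborFinset, hnbr]; simp
    have hvna : v ≠ a := W.G.ne_of_adj hva
    have hvnb : v ≠ b := W.G.ne_of_adj hvb
    -- every edge meets {a, b}
    have hS : ∀ x y, W.G.Adj x y → (x = a ∨ x = b ∨ y = a ∨ y = b) := by
      intro x y hxy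
      by_contra hc
      push_neg at hc
      obtain ⟨hxa, hxb, hya, hyb⟩ := hc
      have hxv : x ≠ v := by
        rintro rfl
        rcases (hmem y).mp hxy with rfl | rfl
        · exact hya rfl
        · exact hyb rfl
      have hyv : y ≠ v := by
        rintro rfl
        rcases (hmem x).mp hxy.symm with rfl | rfl
        · exact hxa rfl
        · exact hxb rfl
      have h1 : ¬ W.G.Adj v x := fun h => by
        rcases (hmem x).mp h with rfl | rfl
        · exact hxa rfl
        · exact hxb rfl
      have h2 : ¬ W.G.Adj v y := fun h => by
        rcases (hmem y).mp h with rfl | rfl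
        · exact hya rfl
        · exact hyb rfl
      exact hK x y v hxy (Ne.symm hxv) (Ne.symm hyv) h1 h2
    -- every vertex outside {a,b} is adjacent to both a and b
    have hcom : ∀ s, s ≠ a → s ≠ b → W.G.Adj s a ∧ W.G.Adj s b := by
      intro s hsa hsb
      have hsab : W.G.Adj s a ∨ W.G.Adj s b := by
        obtain ⟨t, hst⟩ := hadj s
        rcases hS s t hst with rfl | rfl | rfl | rfl
        · exact absurd rfl hsa
        · exact absurd rfl hsb
        · exact Or.inl hst
        · exact Or.inr hst
      by_cases hsa' : W.G.Adj s a <;> by_cases hsb' : W.G.Adj s b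
      · exact ⟨hsa', hsb'⟩
      · exfalso
        have hsv : s ≠ v := by rintro rfl; exact hsb' hvb
        have hsnv : ¬ W.G.Adj s v := by
          intro h
          rcases (hmem s).mp h.symm with rfl | rfl
          · exact hsa rfl
          · exact hsb rfl
        by_cases hab' : W.G.Adj a b
        · -- paw (s, a, b, v)
          exact hnp (posPlane_paw W.adjMatrix s a b v hsym hdiag hsa hsb hsv hab
            (Ne.symm hvna) (Ne.symm hvnb)
            (adjM_pos W hsa') (adjM_pos W hab') (adjM_pos W hva.symm) (adjM_pos W hvb.symm)
            (adjM_of_nadj W hsb') (adjM_of_nadj W hsnv))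
        · -- P4 (s, a, v, b)
          exact hnp (posPlane_P4 W.adjMatrix s a v b hsym hdiag hsa hsv hsb
            (Ne.symm hvna) hab hvnb
            (adjM_pos W hsa') (adjM_pos W hva.symm) (adjM_pos W hvb)
            (adjM_of_nadj W hsnv) (adjM_of_nadj W hsb') (adjM_of_nadj W hab'))
      · exfalso
        have hsv : s ≠ v := by rintro rfl; exact hsa' hva
        have hsnv : ¬ W.G.Adj s v := by
          intro h
          rcases (hmem s).mp h.symm with rfl | rfl
          · exact hsa rfl
          · exact hsb rfl
        by_cases hab' : W.G.Adj a b
        · -- paw (s, b, a, v)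
          exact hnp (posPlane_paw W.adjMatrix s b a v hsym hdiag hsb hsa hsv (Ne.symm hab)
            (Ne.symm hvnb) (Ne.symm hvna)
            (adjM_pos W hsb') (adjM_pos W hab'.symm) (adjM_pos W hvb.symm) (adjM_pos W hva.symm)
            (adjM_of_nadj W hsa') (adjM_of_nadj W hsnv))
        · -- P4 (s, b, v, a)
          exact hnp (posPlane_P4 W.adjMatrix s b v a hsym hdiag hsb hsv hsa
            (Ne.symm hvnb) (Ne.symm hab) hvna
            (adjM_pos W hsb') (adjM_pos W hvb.symm) (adjM_pos W hva)
            (adjM_of_nadj W hsnv) (adjM_of_nadj W hsa')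
            (adjM_of_nadj W (fun h => hab' h.symm)))
      · rcases hsab with h | h
        · exact absurd h hsa'
        · exact absurd h hsb'
    -- independence of the complement of {a, b}
    have hind : ∀ x y, x ≠ a → x ≠ b → y ≠ a → y ≠ b → ¬ W.G.Adj x y := by
      intro x y hxa hxb hya hyb h
      rcases hS x y h with rfl | rfl | rfl | rfl
      · exact hxa rfl
      · exact hxb rfl
      · exact hya rfl
      · exact hyb rfl
    -- counting
    set S : Finset V := Finset.univ \ {a, b} with hSdef
    have hbS : b ∉ S := by simp [hSdef]
    have haS : a ∉ S := by simp [hSdef]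
    have habu : ({a, b} : Finset V) ⊆ Finset.univ := Finset.subset_univ _
    have hScard : S.card = n - 2 := by
      rw [hSdef, Finset.card_sdiff_of_subset habu, Finset.card_univ, ← hn]
      congr 1
      rw [Finset.card_insert_of_notMem (by simpa using hab), Finset.card_singleton]
    have hdegS : ∀ s ∈ S, W.G.degree s = 2 := by
      intro s hs
      rw [hSdef, Finset.mem_sdiff] at hs
      have hsa : s ≠ a := by intro h; exact hs.2 (by simp [h])
      have hsb : s ≠ b := by intro h; exact hs.2 (by simp [h])
      have : W.G.neighborFinset s = {a, b} := by
        ext t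
        rw [SimpleGraph.mem_neighborFinset]
        constructor
        · intro h
          rcases hS s t h with rfl | rfl | rfl | rfl
          · exact absurd rfl hsa
          · exact absurd rfl hsb
          · simp
          · simp
        · intro ht
          rcases Finset.mem_insert.mp ht with rfl | ht
          · exact (hcom s hsa hsb).1
          · rw [Finset.mem_singleton] at ht
            subst ht
            exact (hcom s hsa hsb).2
      rw [← SimpleGraph.card_neighborFinset_eq_degree, this,
        Finset.card_insert_of_notMem (by simpa using hab), Finset.card_singleton]
    have hsum_split : (∑ s ∈ S, W.G.degree s) + (W.G.degree a + W.G.degree b)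
        = ∑ z : V, W.G.degree z := by
      rw [hSdef, ← Finset.sum_pair (f := fun z => W.G.degree z) hab]
      exact Finset.sum_sdiff habu
    have hsumS : ∑ s ∈ S, W.G.degree s = 2 * (n - 2) := by
      rw [Finset.sum_congr rfl hdegS, Finset.sum_const, hScard]
      ring
    by_cases hab' : W.G.Adj a b
    · -- diamond case : n = 4
      have hna : W.G.neighborFinset a = insert b S := by
        ext t
        rw [SimpleGraph.mem_neighborFinset, Finset.mem_insert]
        constructor
        · intro h
          by_cases htb : t = b
          · exact Or.inl htb
          · refine Or.inr ?_
            rw [hSdef, Finset.mem_sdiff]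
            refine ⟨Finset.mem_univ t, ?_⟩
            simp only [Finset.mem_insert, Finset.mem_singleton]
            push_neg
            exact ⟨fun h' => (W.G.irrefl (h' ▸ h)), htb⟩
        · rintro (rfl | ht)
          · exact hab'
          · rw [hSdef, Finset.mem_sdiff] at ht
            have hta : t ≠ a := fun h => ht.2 (by simp [h])
            have htb : t ≠ b := fun h => ht.2 (by simp [h])
            exact ((hcom t hta htb).1).symm
      have hnb : W.G.neighborFinset b = insert a S := by
        ext t
        rw [SimpleGraph.mem_neighborFinset, Finset.mem_insert]
        constructor
        · intro h
          by_cases hta : t = a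
          · exact Or.inl hta
          · refine Or.inr ?_
            rw [hSdef, Finset.mem_sdiff]
            refine ⟨Finset.mem_univ t, ?_⟩
            simp only [Finset.mem_insert, Finset.mem_singleton]
            push_neg
            exact ⟨hta, fun h' => (W.G.irrefl (h' ▸ h))⟩
        · rintro (rfl | ht)
          · exact hab'.symm
          · rw [hSdef, Finset.mem_sdiff] at ht
            have hta : t ≠ a := fun h => ht.2 (by simp [h])
            have htb : t ≠ b := fun h => ht.2 (by simp [h])
            exact ((hcom t hta htb).2).symm
      have hdega : W.G.degree a = (n - 2) + 1 := by
        rw [← SimpleGraph.card_neighborFinset_eq_degree, hna,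
          Finset.card_insert_of_notMem hbS, hScard]
      have hdegb : W.G.degree b = (n - 2) + 1 := by
        rw [← SimpleGraph.card_neighborFinset_eq_degree, hnb,
          Finset.card_insert_of_notMem haS, hScard]
      have hn5 : n = 4 := by omega
      have hS2 : S.card = 2 := by omega
      obtain ⟨c1, c2, hc12, hSeq⟩ := Finset.card_eq_two.mp hS2
      have hc1S : c1 ∈ S := by rw [hSeq]; simp
      have hc2S : c2 ∈ S := by rw [hSeq]; simp
      have hc1a : c1 ≠ a := fun h => haS (h ▸ hc1S)
      have hc1b : c1 ≠ b := fun h => hbS (h ▸ hc1S)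
      have hc2a : c2 ≠ a := fun h => haS (h ▸ hc2S)
      have hc2b : c2 ≠ b := fun h => hbS (h ▸ hc2S)
      have hac1 : W.G.Adj a c1 := ((hcom c1 hc1a hc1b).1).symm
      have hbc1 : W.G.Adj c1 b := (hcom c1 hc1a hc1b).2
      have hac2 : W.G.Adj a c2 := ((hcom c2 hc2a hc2b).1).symm
      have hbc2 : W.G.Adj c2 b := (hcom c2 hc2a hc2b).2
      have hnc : ¬ W.G.Adj c1 c2 := hind c1 c2 hc1a hc1b hc2a hc2b
      have hcover : ∀ z : V, z = a ∨ z = b ∨ z = c1 ∨ z = c2 := by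
        intro z
        by_cases hza : z = a
        · exact Or.inl hza
        by_cases hzb : z = b
        · exact Or.inr (Or.inl hzb)
        have hzS : z ∈ S := by
          rw [hSdef, Finset.mem_sdiff]
          exact ⟨Finset.mem_univ z, by simp [hza, hzb]⟩
        rw [hSeq] at hzS
        rcases Finset.mem_insert.mp hzS with rfl | h
        · exact Or.inr (Or.inr (Or.inl rfl))
        · rw [Finset.mem_singleton] at h
          exact Or.inr (Or.inr (Or.inr h))
      refine Or.inr ⟨a, b, c1, c2, ⟨?_, ?_, ?_⟩, ?_⟩
      · simp [hab, Ne.symm hc1a, Ne.symm hc2a, Ne.symm hc1b, Ne.symm hc2b, hc12]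
      · intro z
        rcases hcover z with rfl | rfl | rfl | rfl <;> simp
      · have hba' : W.G.Adj b a := hab'.symm
        have hc1a' : W.G.Adj c1 a := hac1.symm
        have hc2a' : W.G.Adj c2 a := hac2.symm
        have hbc1' : W.G.Adj b c1 := hbc1.symm
        have hbc2' : W.G.Adj b c2 := hbc2.symm
        have hnc' : ¬ W.G.Adj c2 c1 := fun h => hnc h.symm
        have hba : b ≠ a := Ne.symm hab
        have hax1 : a ≠ c1 := Ne.symm hc1a
        have hax2 : a ≠ c2 := Ne.symm hc2a
        have hbx1 : b ≠ c1 := Ne.symm hc1b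
        have hbx2 : b ≠ c2 := Ne.symm hc2b
        have hc21 : c2 ≠ c1 := Ne.symm hc12
        intro x y
        rcases hcover x with rfl | rfl | rfl | rfl <;> rcases hcover y with rfl | rfl | rfl | rfl <;>
          simp [List.mem_cons, Prod.mk.injEq, SimpleGraph.irrefl, hab', hba', hac1, hac2,
            hbc1, hbc2, hc1a', hc2a', hbc1', hbc2', hnc, hnc', hab, hba, hax1, hax2,
            hbx1, hbx2, hc12, hc21, hc1a, hc1b, hc2a, hc2b]
      · by_contra hw
        apply hnp
        apply posPlane_cyc4 W.adjMatrix c1 a c2 b hsym hdiag hc1a hc12 hc1b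
          (Ne.symm hc2a) hab hc2b
          (adjM_pos W hac1.symm) (adjM_pos W hac2) (adjM_pos W hbc2) (adjM_pos W hbc1)
          (adjM_of_nadj W hnc) (adjM_pos W hab').le
        rw [adjM_of_adj W hac1.symm, adjM_of_adj W hac2, adjM_of_adj W hbc2,
          adjM_of_adj W hbc1]
        intro h
        exact hw (by rw [W.symm a c1]; exact h)
    · -- K23 case : n = 5
      have hna : W.G.neighborFinset a = S := by
        ext t
        rw [SimpleGraph.mem_neighborFinset]
        constructor
        · intro h
          rw [hSdef, Finset.mem_sdiff]
          refine ⟨Finset.mem_univ t, ?_⟩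
          simp only [Finset.mem_insert, Finset.mem_singleton]
          push_neg
          exact ⟨fun h' => (W.G.irrefl (h' ▸ h)), fun h' => hab' (h' ▸ h)⟩
        · intro ht
          rw [hSdef, Finset.mem_sdiff] at ht
          have hta : t ≠ a := fun h => ht.2 (by simp [h])
          have htb : t ≠ b := fun h => ht.2 (by simp [h])
          exact ((hcom t hta htb).1).symm
      have hnb : W.G.neighborFinset b = S := by
        ext t
        rw [SimpleGraph.mem_neighborFinset]
        constructor
        · intro h
          rw [hSdef, Finset.mem_sdiff]
          refine ⟨Finset.mem_univ t, ?_⟩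
          simp only [Finset.mem_insert, Finset.mem_singleton]
          push_neg
          exact ⟨fun h' => hab' (h' ▸ h).symm, fun h' => (W.G.irrefl (h' ▸ h))⟩
        · intro ht
          rw [hSdef, Finset.mem_sdiff] at ht
          have hta : t ≠ a := fun h => ht.2 (by simp [h])
          have htb : t ≠ b := fun h => ht.2 (by simp [h])
          exact ((hcom t hta htb).2).symm
      have hdega : W.G.degree a = n - 2 := by
        rw [← SimpleGraph.card_neighborFinset_eq_degree, hna, hScard]
      have hdegb : W.G.degree b = n - 2 := by
        rw [← SimpleGraph.card_neighborFinset_eq_degree, hnb, hScard]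
      have hn5 : n = 5 := by omega
      have hS3 : S.card = 3 := by omega
      obtain ⟨c1, c2, c3, hc12, hc13, hc23, hSeq⟩ := Finset.card_eq_three.mp hS3
      have hc1S : c1 ∈ S := by rw [hSeq]; simp
      have hc2S : c2 ∈ S := by rw [hSeq]; simp
      have hc3S : c3 ∈ S := by rw [hSeq]; simp
      have hc1a : c1 ≠ a := fun h => haS (h ▸ hc1S)
      have hc1b : c1 ≠ b := fun h => hbS (h ▸ hc1S)
      have hc2a : c2 ≠ a := fun h => haS (h ▸ hc2S)
      have hc2b : c2 ≠ b := fun h => hbS (h ▸ hc2S)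
      have hc3a : c3 ≠ a := fun h => haS (h ▸ hc3S)
      have hc3b : c3 ≠ b := fun h => hbS (h ▸ hc3S)
      have hac1 : W.G.Adj a c1 := ((hcom c1 hc1a hc1b).1).symm
      have hbc1 : W.G.Adj c1 b := (hcom c1 hc1a hc1b).2
      have hac2 : W.G.Adj a c2 := ((hcom c2 hc2a hc2b).1).symm
      have hbc2 : W.G.Adj c2 b := (hcom c2 hc2a hc2b).2
      have hac3 : W.G.Adj a c3 := ((hcom c3 hc3a hc3b).1).symm
      have hbc3 : W.G.Adj c3 b := (hcom c3 hc3a hc3b).2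
      have hn12 : ¬ W.G.Adj c1 c2 := hind c1 c2 hc1a hc1b hc2a hc2b
      have hn13 : ¬ W.G.Adj c1 c3 := hind c1 c3 hc1a hc1b hc3a hc3b
      have hn23 : ¬ W.G.Adj c2 c3 := hind c2 c3 hc2a hc2b hc3a hc3b
      have hcover : ∀ z : V, z = a ∨ z = b ∨ z = c1 ∨ z = c2 ∨ z = c3 := by
        intro z
        by_cases hza : z = a
        · exact Or.inl hza
        by_cases hzb : z = b
        · exact Or.inr (Or.inl hzb)
        have hzS : z ∈ S := by
          rw [hSdef, Finset.mem_sdiff]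
          exact ⟨Finset.mem_univ z, by simp [hza, hzb]⟩
        rw [hSeq] at hzS
        simp only [Finset.mem_insert, Finset.mem_singleton] at hzS
        tauto
      refine Or.inl ⟨a, b, c1, c2, c3, ⟨?_, ?_, ?_⟩, ?_, ?_⟩
      · simp [hab, Ne.symm hc1a, Ne.symm hc2a, Ne.symm hc3a, Ne.symm hc1b, Ne.symm hc2b,
          Ne.symm hc3b, hc12, hc13, hc23]
      · intro z
        rcases hcover z with rfl | rfl | rfl | rfl | rfl <;> simp
      · have hc1a' : W.G.Adj c1 a := hac1.symm
        have hc2a' : W.G.Adj c2 a := hac2.symm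
        have hc3a' : W.G.Adj c3 a := hac3.symm
        have hbc1' : W.G.Adj b c1 := hbc1.symm
        have hbc2' : W.G.Adj b c2 := hbc2.symm
        have hbc3' : W.G.Adj b c3 := hbc3.symm
        have hn12' : ¬ W.G.Adj c2 c1 := fun h => hn12 h.symm
        have hn13' : ¬ W.G.Adj c3 c1 := fun h => hn13 h.symm
        have hn23' : ¬ W.G.Adj c3 c2 := fun h => hn23 h.symm
        have hba' : ¬ W.G.Adj b a := fun h => hab' h.symm
        have hba : b ≠ a := Ne.symm hab
        have hax1 : a ≠ c1 := Ne.symm hc1a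
        have hax2 : a ≠ c2 := Ne.symm hc2a
        have hax3 : a ≠ c3 := Ne.symm hc3a
        have hbx1 : b ≠ c1 := Ne.symm hc1b
        have hbx2 : b ≠ c2 := Ne.symm hc2b
        have hbx3 : b ≠ c3 := Ne.symm hc3b
        have hc21 : c2 ≠ c1 := Ne.symm hc12
        have hc31 : c3 ≠ c1 := Ne.symm hc13
        have hc32 : c3 ≠ c2 := Ne.symm hc23
        intro x y
        rcases hcover x with rfl | rfl | rfl | rfl | rfl <;>
          rcases hcover y with rfl | rfl | rfl | rfl | rfl <;>
          simp [List.mem_cons, Prod.mk.injEq, SimpleGraph.irrefl, hac1, hac2, hac3,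
            hbc1, hbc2, hbc3, hc1a', hc2a', hc3a', hbc1', hbc2', hbc3', hn12, hn13, hn23,
            hn12', hn13', hn23', hab', hba', hab, hba, hax1, hax2, hax3, hbx1, hbx2, hbx3,
            hc12, hc13, hc23, hc21, hc31, hc32, hc1a, hc1b, hc2a, hc2b, hc3a, hc3b]
      · by_contra hw
        apply hnp
        apply posPlane_cyc4 W.adjMatrix c1 a c2 b hsym hdiag hc1a hc12 hc1b
          (Ne.symm hc2a) hab hc2b
          (adjM_pos W hac1.symm) (adjM_pos W hac2) (adjM_pos W hbc2) (adjM_pos W hbc1)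
          (adjM_of_nadj W hn12) (le_of_eq (adjM_of_nadj W hab').symm)
        rw [adjM_of_adj W hac1.symm, adjM_of_adj W hac2, adjM_of_adj W hbc2,
          adjM_of_adj W hbc1]
        intro h
        exact hw (by rw [W.symm a c1]; exact h)
      · by_contra hw
        apply hnp
        apply posPlane_cyc4 W.adjMatrix c1 a c3 b hsym hdiag hc1a hc13 hc1b
          (Ne.symm hc3a) hab hc3b
          (adjM_pos W hac1.symm) (adjM_pos W hac3) (adjM_pos W hbc3) (adjM_pos W hbc1)
          (adjM_of_nadj W hn13) (le_of_eq (adjM_of_nadj W hab').symm)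
        rw [adjM_of_adj W hac1.symm, adjM_of_adj W hac3, adjM_of_adj W hbc3,
          adjM_of_adj W hbc1]
        intro h
        exact hw (by rw [W.symm a c1]; exact h)



end Forward

section Reverse
variable {V : Type*} [Fintype V] [DecidableEq V]

lemma qf_expand4 (A : Matrix V V ℝ) (u v x1 x2 : V)
    (huv : u ≠ v) (hux1 : u ≠ x1) (hux2 : u ≠ x2) (hvx1 : v ≠ x1) (hvx2 : v ≠ x2)
    (hx12 : x1 ≠ x2) (huniv : ∀ z : V, z = u ∨ z = v ∨ z = x1 ∨ z = x2) (z : V → ℝ) :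
    qf A z = (A u u * z u + A u v * z v + A u x1 * z x1 + A u x2 * z x2) * z u
      + (A v u * z u + A v v * z v + A v x1 * z x1 + A v x2 * z x2) * z v
      + (A x1 u * z u + A x1 v * z v + A x1 x1 * z x1 + A x1 x2 * z x2) * z x1
      + (A x2 u * z u + A x2 v * z v + A x2 x1 * z x1 + A x2 x2 * z x2) * z x2 := by
  have hU : (Finset.univ : Finset V) = {u, v, x1, x2} := by
    ext t
    simp only [Finset.mem_univ, true_iff, Finset.mem_insert, Finset.mem_singleton]
    exact huniv t
  have hsum : ∀ g : V → ℝ, ∑ j, g j = g u + g v + g x1 + g x2 := by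
    intro g
    rw [hU, Finset.sum_insert (by simp [huv, hux1, hux2]),
      Finset.sum_insert (by simp [hvx1, hvx2]), Finset.sum_insert (by simp [hx12]),
      Finset.sum_singleton]
    ring
  have hmv : ∀ p, (A *ᵥ z) p = A p u * z u + A p v * z v + A p x1 * z x1 + A p x2 * z x2 := by
    intro p
    rw [Matrix.mulVec, dotProduct, hsum (fun j => A p j * z j)]
  rw [qf, dotProduct, hsum (fun j => z j * (A *ᵥ z) j), hmv, hmv, hmv, hmv]
  ring

lemma qf_expand5 (A : Matrix V V ℝ) (u v x1 x2 x3 : V)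
    (huv : u ≠ v) (hux1 : u ≠ x1) (hux2 : u ≠ x2) (hux3 : u ≠ x3)
    (hvx1 : v ≠ x1) (hvx2 : v ≠ x2) (hvx3 : v ≠ x3)
    (hx12 : x1 ≠ x2) (hx13 : x1 ≠ x3) (hx23 : x2 ≠ x3)
    (huniv : ∀ z : V, z = u ∨ z = v ∨ z = x1 ∨ z = x2 ∨ z = x3) (z : V → ℝ) :
    qf A z = (A u u * z u + A u v * z v + A u x1 * z x1 + A u x2 * z x2 + A u x3 * z x3) * z u
      + (A v u * z u + A v v * z v + A v x1 * z x1 + A v x2 * z x2 + A v x3 * z x3) * z v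
      + (A x1 u * z u + A x1 v * z v + A x1 x1 * z x1 + A x1 x2 * z x2 + A x1 x3 * z x3) * z x1
      + (A x2 u * z u + A x2 v * z v + A x2 x1 * z x1 + A x2 x2 * z x2 + A x2 x3 * z x3) * z x2
      + (A x3 u * z u + A x3 v * z v + A x3 x1 * z x1 + A x3 x2 * z x2 + A x3 x3 * z x3) * z x3 := by
  have hU : (Finset.univ : Finset V) = {u, v, x1, x2, x3} := by
    ext t
    simp only [Finset.mem_univ, true_iff, Finset.mem_insert, Finset.mem_singleton]
    exact huniv t
  have hsum : ∀ g : V → ℝ, ∑ j, g j = g u + g v + g x1 + g x2 + g x3 := by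
    intro g
    rw [hU, Finset.sum_insert (by simp [huv, hux1, hux2, hux3]),
      Finset.sum_insert (by simp [hvx1, hvx2, hvx3]),
      Finset.sum_insert (by simp [hx12, hx13]), Finset.sum_insert (by simp [hx23]),
      Finset.sum_singleton]
    ring
  have hmv : ∀ p, (A *ᵥ z) p
      = A p u * z u + A p v * z v + A p x1 * z x1 + A p x2 * z x2 + A p x3 * z x3 := by
    intro p
    rw [Matrix.mulVec, dotProduct, hsum (fun j => A p j * z j)]
  rw [qf, dotProduct, hsum (fun j => z j * (A *ᵥ z) j), hmv, hmv, hmv, hmv, hmv]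
  ring

end Reverse

section Reverse2
variable {V : Type*} [Fintype V] [DecidableEq V]

lemma reverse101 (W : WeightedGraph V) (u v x1 x2 : V)
    (hsh : Theta101Shape W u v x1 x2)
    (hw : W.w u x1 * W.w x2 v = W.w u x2 * W.w x1 v) :
    posInertia W.adjMatrix = 1 := by
  obtain ⟨hnd, hcov, hadj⟩ := hsh
  simp only [List.nodup_cons, List.mem_cons, List.not_mem_nil, or_false,
    List.nodup_nil, and_true, not_or] at hnd
  obtain ⟨⟨huv, hux1, hux2⟩, ⟨hvx1, hvx2⟩, hx12, -⟩ := hnd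
  have hcov' : ∀ z : V, z = u ∨ z = v ∨ z = x1 ∨ z = x2 := by
    intro z
    have := hcov z
    simpa [List.mem_cons] using this
  have hAuv : W.G.Adj u v := (hadj u v).mpr (by simp)
  have hAux1 : W.G.Adj u x1 := (hadj u x1).mpr (by simp)
  have hAux2 : W.G.Adj u x2 := (hadj u x2).mpr (by simp)
  have hAx1v : W.G.Adj x1 v := (hadj x1 v).mpr (by simp)
  have hAx2v : W.G.Adj x2 v := (hadj x2 v).mpr (by simp)
  have hN12 : ¬ W.G.Adj x1 x2 := by
    intro h
    have := (hadj x1 x2).mp h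
    simp only [List.mem_cons, List.not_mem_nil, or_false, Prod.mk.injEq] at this
    rcases this with (⟨h1,h2⟩|⟨h1,h2⟩|⟨h1,h2⟩|⟨h1,h2⟩|⟨h1,h2⟩)|(⟨h1,h2⟩|⟨h1,h2⟩|⟨h1,h2⟩|⟨h1,h2⟩|⟨h1,h2⟩) <;>
      first
        | exact hux1 h1.symm
        | exact hux2 h1.symm
        | exact hvx2 h2.symm
        | exact hvx1 h1.symm
        | exact hx12 (h1.trans h2.symm)
        | exact hx12 (h2.trans h1.symm)
        | (subst h1; exact hvx2 h2.symm)
        | (subst h2; exact hux1 h1.symm)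
        | simp_all
  have hherm := adjM_herm W
  have hdg := adjM_diag W
  have hsm := adjM_sym W
  refine posInertia_eq_one hherm ⟨supp4 u v x1 x2 1 1 0 0, ?_⟩ ?_
  · rw [qf_supp4 W.adjMatrix u v x1 x2 huv hux1 hux2 hvx1 hvx2 hx12, hdg u, hdg v]
    have key : 0 < W.adjMatrix u v + W.adjMatrix v u := by
      have h1 := adjM_pos W hAuv
      have h2 := adjM_pos W hAuv.symm
      linarith
    exact lt_of_lt_of_eq key (by ring)
  · apply not_posPlane_of_null W.adjMatrix
      (fun z => W.w u x1 * z u + W.w x1 v * z v)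
    · intro a b x y
      simp only [Pi.add_apply, Pi.smul_apply, smul_eq_mul]
      ring
    · intro z hz
      rw [qf_expand4 W.adjMatrix u v x1 x2 huv hux1 hux2 hvx1 hvx2 hx12 hcov' z,
        hdg u, hdg v, hdg x1, hdg x2,
        adjM_of_adj W hAuv, adjM_of_adj W hAuv.symm,
        adjM_of_adj W hAux1, adjM_of_adj W hAux1.symm,
        adjM_of_adj W hAux2, adjM_of_adj W hAux2.symm,
        adjM_of_adj W hAx1v, adjM_of_adj W hAx1v.symm,
        adjM_of_adj W hAx2v, adjM_of_adj W hAx2v.symm,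
        adjM_of_nadj W hN12, adjM_of_nadj W (fun h => hN12 h.symm)]
      rw [W.symm v u, W.symm x1 u, W.symm x2 u, W.symm v x1, W.symm v x2]
      have hb1 : 0 < W.w x1 v := W.pos x1 v hAx1v
      have hc : 0 < W.w u v := W.pos u v hAuv
      have ha1 : 0 < W.w u x1 := W.pos u x1 hAux1
      have hkey : ((0 * z u + W.w u v * z v + W.w u x1 * z x1 + W.w u x2 * z x2) * z u
          + (W.w u v * z u + 0 * z v + W.w x1 v * z x1 + W.w x2 v * z x2) * z v
          + (W.w u x1 * z u + W.w x1 v * z v + 0 * z x1 + 0 * z x2) * z x1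
          + (W.w u x2 * z u + W.w x2 v * z v + 0 * z x1 + 0 * z x2) * z x2) * W.w x1 v
          = -(2 * W.w u v * W.w u x1 * (z u)^2) := by
        linear_combination (2 * W.w u v * z u + 2 * W.w x1 v * z x1 + 2 * W.w x2 v * z x2) * hz
          - 2 * z x2 * z u * hw
      nlinarith [sq_nonneg (z u), mul_pos hc ha1]
end Reverse2

section Reverse3
variable {V : Type*} [Fintype V] [DecidableEq V]

lemma reverse111 (W : WeightedGraph V) (u v x1 x2 x3 : V)
    (hsh : Theta111Shape W u v x1 x2 x3)
    (hw2 : W.w u x1 * W.w x2 v = W.w u x2 * W.w x1 v)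
    (hw3 : W.w u x1 * W.w x3 v = W.w u x3 * W.w x1 v) :
    posInertia W.adjMatrix = 1 := by
  obtain ⟨hnd, hcov, hadj⟩ := hsh
  simp only [List.nodup_cons, List.mem_cons, List.not_mem_nil, or_false,
    List.nodup_nil, and_true, not_or] at hnd
  obtain ⟨⟨huv, hux1, hux2, hux3⟩, ⟨hvx1, hvx2, hvx3⟩, ⟨hx12, hx13⟩, hx23, -⟩ := hnd
  have hcov' : ∀ z : V, z = u ∨ z = v ∨ z = x1 ∨ z = x2 ∨ z = x3 := by
    intro z
    have := hcov z
    simpa [List.mem_cons] using this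
  have hAux1 : W.G.Adj u x1 := (hadj u x1).mpr (by simp)
  have hAux2 : W.G.Adj u x2 := (hadj u x2).mpr (by simp)
  have hAux3 : W.G.Adj u x3 := (hadj u x3).mpr (by simp)
  have hAx1v : W.G.Adj x1 v := (hadj x1 v).mpr (by simp)
  have hAx2v : W.G.Adj x2 v := (hadj x2 v).mpr (by simp)
  have hAx3v : W.G.Adj x3 v := (hadj x3 v).mpr (by simp)
  have hNuv : ¬ W.G.Adj u v := by
    intro h
    have h' := (hadj u v).mp h
    simp [Prod.mk.injEq, huv, hux1, hux2, hux3, hvx1, hvx2, hvx3, hx12, hx13, hx23,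
      Ne.symm huv, Ne.symm hux1, Ne.symm hux2, Ne.symm hux3, Ne.symm hvx1, Ne.symm hvx2,
      Ne.symm hvx3, Ne.symm hx12, Ne.symm hx13, Ne.symm hx23] at h'
  have hN12 : ¬ W.G.Adj x1 x2 := by
    intro h
    have h' := (hadj x1 x2).mp h
    simp [Prod.mk.injEq, huv, hux1, hux2, hux3, hvx1, hvx2, hvx3, hx12, hx13, hx23,
      Ne.symm huv, Ne.symm hux1, Ne.symm hux2, Ne.symm hux3, Ne.symm hvx1, Ne.symm hvx2,
      Ne.symm hvx3, Ne.symm hx12, Ne.symm hx13, Ne.symm hx23] at h'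
  have hN13 : ¬ W.G.Adj x1 x3 := by
    intro h
    have h' := (hadj x1 x3).mp h
    simp [Prod.mk.injEq, huv, hux1, hux2, hux3, hvx1, hvx2, hvx3, hx12, hx13, hx23,
      Ne.symm huv, Ne.symm hux1, Ne.symm hux2, Ne.symm hux3, Ne.symm hvx1, Ne.symm hvx2,
      Ne.symm hvx3, Ne.symm hx12, Ne.symm hx13, Ne.symm hx23] at h'
  have hN23 : ¬ W.G.Adj x2 x3 := by
    intro h
    have h' := (hadj x2 x3).mp h
    simp [Prod.mk.injEq, huv, hux1, hux2, hux3, hvx1, hvx2, hvx3, hx12, hx13, hx23,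
      Ne.symm huv, Ne.symm hux1, Ne.symm hux2, Ne.symm hux3, Ne.symm hvx1, Ne.symm hvx2,
      Ne.symm hvx3, Ne.symm hx12, Ne.symm hx13, Ne.symm hx23] at h'
  have hherm := adjM_herm W
  have hdg := adjM_diag W
  refine posInertia_eq_one hherm ⟨supp4 u v x1 x2 1 0 1 0, ?_⟩ ?_
  · rw [qf_supp4 W.adjMatrix u v x1 x2 huv hux1 hux2 hvx1 hvx2 hx12, hdg u, hdg x1]
    have key : 0 < W.adjMatrix u x1 + W.adjMatrix x1 u := by
      have h1 := adjM_pos W hAux1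
      have h2 := adjM_pos W hAux1.symm
      linarith
    exact lt_of_lt_of_eq key (by ring)
  · apply not_posPlane_of_null W.adjMatrix
      (fun z => W.w u x1 * z x1 + W.w u x2 * z x2 + W.w u x3 * z x3)
    · intro a b x y
      simp only [Pi.add_apply, Pi.smul_apply, smul_eq_mul]
      ring
    · intro z hz
      rw [qf_expand5 W.adjMatrix u v x1 x2 x3 huv hux1 hux2 hux3 hvx1 hvx2 hvx3
        hx12 hx13 hx23 hcov' z,
        hdg u, hdg v, hdg x1, hdg x2, hdg x3,
        adjM_of_adj W hAux1, adjM_of_adj W hAux1.symm,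
        adjM_of_adj W hAux2, adjM_of_adj W hAux2.symm,
        adjM_of_adj W hAux3, adjM_of_adj W hAux3.symm,
        adjM_of_adj W hAx1v, adjM_of_adj W hAx1v.symm,
        adjM_of_adj W hAx2v, adjM_of_adj W hAx2v.symm,
        adjM_of_adj W hAx3v, adjM_of_adj W hAx3v.symm,
        adjM_of_nadj W hNuv, adjM_of_nadj W (fun h => hNuv h.symm),
        adjM_of_nadj W hN12, adjM_of_nadj W (fun h => hN12 h.symm),
        adjM_of_nadj W hN13, adjM_of_nadj W (fun h => hN13 h.symm),
        adjM_of_nadj W hN23, adjM_of_nadj W (fun h => hN23 h.symm)]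
      rw [W.symm x1 u, W.symm x2 u, W.symm x3 u, W.symm v x1, W.symm v x2, W.symm v x3]
      have ha1 : 0 < W.w u x1 := W.pos u x1 hAux1
      have hkey : ((0 * z u + 0 * z v + W.w u x1 * z x1 + W.w u x2 * z x2 + W.w u x3 * z x3) * z u
          + (0 * z u + 0 * z v + W.w x1 v * z x1 + W.w x2 v * z x2 + W.w x3 v * z x3) * z v
          + (W.w u x1 * z u + W.w x1 v * z v + 0 * z x1 + 0 * z x2 + 0 * z x3) * z x1
          + (W.w u x2 * z u + W.w x2 v * z v + 0 * z x1 + 0 * z x2 + 0 * z x3) * z x2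
          + (W.w u x3 * z u + W.w x3 v * z v + 0 * z x1 + 0 * z x2 + 0 * z x3) * z x3)
            * W.w u x1 = 0 := by
        linear_combination (2 * z u * W.w u x1 + 2 * z v * W.w x1 v) * hz
          + 2 * z v * z x2 * hw2 + 2 * z v * z x3 * hw3
      have h0 : (0 * z u + 0 * z v + W.w u x1 * z x1 + W.w u x2 * z x2 + W.w u x3 * z x3) * z u
          + (0 * z u + 0 * z v + W.w x1 v * z x1 + W.w x2 v * z x2 + W.w x3 v * z x3) * z v
          + (W.w u x1 * z u + W.w x1 v * z v + 0 * z x1 + 0 * z x2 + 0 * z x3) * z x1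
          + (W.w u x2 * z u + W.w x2 v * z v + 0 * z x1 + 0 * z x2 + 0 * z x3) * z x2
          + (W.w u x3 * z u + W.w x3 v * z v + 0 * z x1 + 0 * z x2 + 0 * z x3) * z x3 = 0 := by
        rcases mul_eq_zero.mp hkey with h | h
        · exact h
        · exact absurd h (ne_of_gt ha1)
      linarith
end Reverse3

/-- the weighted bicyclic graphs with exactly one positive
eigenvalue. -/
theorem stmt7 {V : Type*} [Fintype V] [DecidableEq V] (W : WeightedGraph V)
    (hbic : W.IsBicyclic) :
    W.iPos = 1 ↔
      ((∃ u v x1 x2 x3 : V, Theta111Shape W u v x1 x2 x3 ∧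
          W.w u x1 * W.w x2 v = W.w u x2 * W.w x1 v ∧
          W.w u x1 * W.w x3 v = W.w u x3 * W.w x1 v) ∨
       (∃ u v x1 x2 : V, Theta101Shape W u v x1 x2 ∧
          W.w u x1 * W.w x2 v = W.w u x2 * W.w x1 v)) := by
    classical
  constructor
  · intro hpos
    have hherm := adjM_herm W
    have hnp : ¬ PosPlane W.adjMatrix :=
      not_posPlane_of_posInertia_le_one hherm (le_of_eq hpos)
    exact forward_classification W hbic.1 hbic.2 hnp
  · intro h
    rcases h with ⟨u, v, x1, x2, x3, hsh, hw2, hw3⟩ | ⟨u, v, x1, x2, hsh, hw⟩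
    · exact reverse111 W u v x1 x2 x3 hsh hw2 hw3
    · exact reverse101 W u v x1 x2 hsh hw
end

section
/- Let G_w be a weighted bicyclic graph. Then the rank of A(G_w) equals 2 if and only if G_w is isomorphic as a weighted graph to weighted θ(1,1,1) — the complete bipartite graph K_{2,3} with parts {u,v} and {x_1,x_2,x_3} — whose weights satisfy w(ux_1)·w(x_2v) = w(ux_2)·w(x_1v) and w(ux_1)·w(x_3v) = w(ux_3)·w(x_1v). -/
open Matrix

section AuxRank2

set_option linter.unusedSectionVars false

open Matrix Submodule Module

variable {V : Type*} [Fintype V] [DecidableEq V]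

lemma pair_eq_range' {M : Type*} [AddCommGroup M] [Module ℝ M] (x y : M) :
    ({x, y} : Set M) = Set.range ![x, y] := by ext z; simp [Fin.exists_fin_two, or_comm]

lemma cols_indep {A : Matrix V V ℝ} (hsym : ∀ a b, A a b = A b a) (hdiag : ∀ a, A a a = 0)
    {a b : V} (hab : A a b ≠ 0) : LinearIndependent ℝ ![Aᵀ a, Aᵀ b] := by
  rw [LinearIndependent.pair_iff]
  intro s t hst
  have h1 := congrFun hst b
  have h2 := congrFun hst a
  simp only [Pi.add_apply, Pi.smul_apply, Matrix.transpose_apply, smul_eq_mul, Pi.zero_apply,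
    hdiag, mul_zero, add_zero, zero_add] at h1 h2
  have hba : A b a ≠ 0 := by rwa [← hsym]
  constructor
  · exact by have := mul_eq_zero.mp h1; tauto
  · exact by have := mul_eq_zero.mp h2; tauto

lemma exists_coeffs {A : Matrix V V ℝ} (h2 : A.rank = 2)
    {a b : V} (hind : LinearIndependent ℝ ![Aᵀ a, Aᵀ b]) (x : V) :
    ∃ c d : ℝ, ∀ i, A i x = c * A i a + d * A i b := by
  have hrange : ({Aᵀ a, Aᵀ b} : Set (V → ℝ)) ⊆ Set.range Aᵀ := by
    rintro y (rfl | rfl) <;> exact ⟨_, rfl⟩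
  have hle : span ℝ ({Aᵀ a, Aᵀ b} : Set (V → ℝ)) ≤ span ℝ (Set.range Aᵀ) :=
    span_mono hrange
  have hfr : finrank ℝ (span ℝ ({Aᵀ a, Aᵀ b} : Set (V → ℝ))) = 2 := by
    rw [pair_eq_range', finrank_span_eq_card hind, Fintype.card_fin]
  have heq := Submodule.eq_of_le_of_finrank_eq hle
    (by rw [hfr, ← h2, Matrix.rank_eq_finrank_span_cols, show A.col = Aᵀ from rfl])
  have hx : Aᵀ x ∈ span ℝ ({Aᵀ a, Aᵀ b} : Set (V → ℝ)) := by
    rw [heq]; exact subset_span ⟨x, rfl⟩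
  obtain ⟨c, d, hcd⟩ := Submodule.mem_span_pair.mp hx
  refine ⟨c, d, fun i => ?_⟩
  have := congrFun hcd i
  simp only [Pi.add_apply, Pi.smul_apply, Matrix.transpose_apply, smul_eq_mul] at this
  linarith

lemma rank_eq_two_of {A : Matrix V V ℝ} {a b : V}
    (hind : LinearIndependent ℝ ![Aᵀ a, Aᵀ b])
    (hsp : ∀ x : V, ∃ c d : ℝ, ∀ i, A i x = c * A i a + d * A i b) :
    A.rank = 2 := by
  rw [Matrix.rank_eq_finrank_span_cols]
  have hspan : span ℝ (Set.range Aᵀ) = span ℝ ({Aᵀ a, Aᵀ b} : Set (V → ℝ)) := by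
    apply le_antisymm
    · rw [span_le]
      rintro y ⟨x, rfl⟩
      obtain ⟨c, d, h⟩ := hsp x
      exact Submodule.mem_span_pair.mpr ⟨c, d, funext fun i => by
        simp only [Pi.add_apply, Pi.smul_apply, Matrix.transpose_apply, smul_eq_mul]
        linarith [h i]⟩
    · exact span_mono (by rintro y (rfl | rfl) <;> exact ⟨_, rfl⟩)
  rw [show A.col = Aᵀ from rfl, hspan, pair_eq_range', finrank_span_eq_card hind, Fintype.card_fin]

lemma WeightedGraph.adjMatrix_of_adj (W : WeightedGraph V) {a b : V} (h : W.G.Adj a b) :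
    W.adjMatrix a b = W.w a b := by simp [WeightedGraph.adjMatrix, h]

lemma WeightedGraph.adjMatrix_of_not_adj (W : WeightedGraph V) {a b : V} (h : ¬ W.G.Adj a b) :
    W.adjMatrix a b = 0 := by simp [WeightedGraph.adjMatrix, h]

lemma WeightedGraph.adjMatrix_ne_zero_iff (W : WeightedGraph V) {a b : V} :
    W.adjMatrix a b ≠ 0 ↔ W.G.Adj a b := by
  by_cases h : W.G.Adj a b
  · simpa [W.adjMatrix_of_adj h, h] using (W.pos a b h).ne'
  · simp [W.adjMatrix_of_not_adj h, h]

lemma WeightedGraph.adjMatrix_symm' (W : WeightedGraph V) (a b : V) :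
    W.adjMatrix a b = W.adjMatrix b a := by
  by_cases h : W.G.Adj a b
  · rw [W.adjMatrix_of_adj h, W.adjMatrix_of_adj h.symm, W.symm]
  · rw [W.adjMatrix_of_not_adj h, W.adjMatrix_of_not_adj (fun hh => h hh.symm)]

lemma WeightedGraph.adjMatrix_diag (W : WeightedGraph V) (a : V) : W.adjMatrix a a = 0 :=
  W.adjMatrix_of_not_adj (W.G.irrefl)

end AuxRank2
lemma backward_dir {V : Type*} [Fintype V] [DecidableEq V] (W : WeightedGraph V)
    {u v x1 x2 x3 : V} (hsh : Theta111Shape W u v x1 x2 x3)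
    (h2 : W.w u x1 * W.w x2 v = W.w u x2 * W.w x1 v)
    (h3 : W.w u x1 * W.w x3 v = W.w u x3 * W.w x1 v) :
    W.adjMatrix.rank = 2 := by
  obtain ⟨hnd, hall, hadj⟩ := hsh
  simp only [List.nodup_cons, List.mem_cons, List.not_mem_nil, or_false, List.mem_singleton,
    List.nodup_nil, not_false_eq_true, and_true, not_or] at hnd
  obtain ⟨⟨huv, hux1, hux2, hux3⟩, ⟨hvx1, hvx2, hvx3⟩, ⟨hx12, hx13⟩, hx23⟩ := hnd
  simp only [adjSpec] at hadj
  simp only [List.mem_cons, List.not_mem_nil, or_false, List.mem_singleton] at hall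
  have e_u_x1 : W.G.Adj u x1 := by simp [hadj, Prod.ext_iff, huv, hux1, hux2, hux3, hvx1, hvx2, hvx3, hx12, hx13, hx23, Ne.symm huv, Ne.symm hux1, Ne.symm hux2, Ne.symm hux3, Ne.symm hvx1, Ne.symm hvx2, Ne.symm hvx3, Ne.symm hx12, Ne.symm hx13, Ne.symm hx23]
  have e_u_x2 : W.G.Adj u x2 := by simp [hadj, Prod.ext_iff, huv, hux1, hux2, hux3, hvx1, hvx2, hvx3, hx12, hx13, hx23, Ne.symm huv, Ne.symm hux1, Ne.symm hux2, Ne.symm hux3, Ne.symm hvx1, Ne.symm hvx2, Ne.symm hvx3, Ne.symm hx12, Ne.symm hx13, Ne.symm hx23]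
  have e_u_x3 : W.G.Adj u x3 := by simp [hadj, Prod.ext_iff, huv, hux1, hux2, hux3, hvx1, hvx2, hvx3, hx12, hx13, hx23, Ne.symm huv, Ne.symm hux1, Ne.symm hux2, Ne.symm hux3, Ne.symm hvx1, Ne.symm hvx2, Ne.symm hvx3, Ne.symm hx12, Ne.symm hx13, Ne.symm hx23]
  have e_x1_v : W.G.Adj x1 v := by simp [hadj, Prod.ext_iff, huv, hux1, hux2, hux3, hvx1, hvx2, hvx3, hx12, hx13, hx23, Ne.symm huv, Ne.symm hux1, Ne.symm hux2, Ne.symm hux3, Ne.symm hvx1, Ne.symm hvx2, Ne.symm hvx3, Ne.symm hx12, Ne.symm hx13, Ne.symm hx23]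
  have e_x2_v : W.G.Adj x2 v := by simp [hadj, Prod.ext_iff, huv, hux1, hux2, hux3, hvx1, hvx2, hvx3, hx12, hx13, hx23, Ne.symm huv, Ne.symm hux1, Ne.symm hux2, Ne.symm hux3, Ne.symm hvx1, Ne.symm hvx2, Ne.symm hvx3, Ne.symm hx12, Ne.symm hx13, Ne.symm hx23]
  have e_x3_v : W.G.Adj x3 v := by simp [hadj, Prod.ext_iff, huv, hux1, hux2, hux3, hvx1, hvx2, hvx3, hx12, hx13, hx23, Ne.symm huv, Ne.symm hux1, Ne.symm hux2, Ne.symm hux3, Ne.symm hvx1, Ne.symm hvx2, Ne.symm hvx3, Ne.symm hx12, Ne.symm hx13, Ne.symm hx23]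
  have n_u_v : ¬ W.G.Adj u v := by simp [hadj, Prod.ext_iff, huv, hux1, hux2, hux3, hvx1, hvx2, hvx3, hx12, hx13, hx23, Ne.symm huv, Ne.symm hux1, Ne.symm hux2, Ne.symm hux3, Ne.symm hvx1, Ne.symm hvx2, Ne.symm hvx3, Ne.symm hx12, Ne.symm hx13, Ne.symm hx23]
  have n_x1_x2 : ¬ W.G.Adj x1 x2 := by simp [hadj, Prod.ext_iff, huv, hux1, hux2, hux3, hvx1, hvx2, hvx3, hx12, hx13, hx23, Ne.symm huv, Ne.symm hux1, Ne.symm hux2, Ne.symm hux3, Ne.symm hvx1, Ne.symm hvx2, Ne.symm hvx3, Ne.symm hx12, Ne.symm hx13, Ne.symm hx23]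
  have n_x1_x3 : ¬ W.G.Adj x1 x3 := by simp [hadj, Prod.ext_iff, huv, hux1, hux2, hux3, hvx1, hvx2, hvx3, hx12, hx13, hx23, Ne.symm huv, Ne.symm hux1, Ne.symm hux2, Ne.symm hux3, Ne.symm hvx1, Ne.symm hvx2, Ne.symm hvx3, Ne.symm hx12, Ne.symm hx13, Ne.symm hx23]
  have n_x2_x3 : ¬ W.G.Adj x2 x3 := by simp [hadj, Prod.ext_iff, huv, hux1, hux2, hux3, hvx1, hvx2, hvx3, hx12, hx13, hx23, Ne.symm huv, Ne.symm hux1, Ne.symm hux2, Ne.symm hux3, Ne.symm hvx1, Ne.symm hvx2, Ne.symm hvx3, Ne.symm hx12, Ne.symm hx13, Ne.symm hx23]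
  have E_u_u : W.adjMatrix u u = 0 := W.adjMatrix_diag u
  have E_u_v : W.adjMatrix u v = 0 := W.adjMatrix_of_not_adj n_u_v
  have E_u_x1 : W.adjMatrix u x1 = W.w u x1 := by rw [W.adjMatrix_of_adj e_u_x1]
  have E_u_x2 : W.adjMatrix u x2 = W.w u x2 := by rw [W.adjMatrix_of_adj e_u_x2]
  have E_u_x3 : W.adjMatrix u x3 = W.w u x3 := by rw [W.adjMatrix_of_adj e_u_x3]
  have E_v_u : W.adjMatrix v u = 0 := by rw [W.adjMatrix_symm']; exact W.adjMatrix_of_not_adj n_u_v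
  have E_v_v : W.adjMatrix v v = 0 := W.adjMatrix_diag v
  have E_v_x1 : W.adjMatrix v x1 = W.w x1 v := by rw [W.adjMatrix_symm', W.adjMatrix_of_adj e_x1_v]
  have E_v_x2 : W.adjMatrix v x2 = W.w x2 v := by rw [W.adjMatrix_symm', W.adjMatrix_of_adj e_x2_v]
  have E_v_x3 : W.adjMatrix v x3 = W.w x3 v := by rw [W.adjMatrix_symm', W.adjMatrix_of_adj e_x3_v]
  have E_x1_u : W.adjMatrix x1 u = W.w u x1 := by rw [W.adjMatrix_symm', W.adjMatrix_of_adj e_u_x1]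
  have E_x1_v : W.adjMatrix x1 v = W.w x1 v := by rw [W.adjMatrix_of_adj e_x1_v]
  have E_x1_x1 : W.adjMatrix x1 x1 = 0 := W.adjMatrix_diag x1
  have E_x1_x2 : W.adjMatrix x1 x2 = 0 := W.adjMatrix_of_not_adj n_x1_x2
  have E_x1_x3 : W.adjMatrix x1 x3 = 0 := W.adjMatrix_of_not_adj n_x1_x3
  have E_x2_u : W.adjMatrix x2 u = W.w u x2 := by rw [W.adjMatrix_symm', W.adjMatrix_of_adj e_u_x2]
  have E_x2_v : W.adjMatrix x2 v = W.w x2 v := by rw [W.adjMatrix_of_adj e_x2_v]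
  have E_x2_x1 : W.adjMatrix x2 x1 = 0 := by rw [W.adjMatrix_symm']; exact W.adjMatrix_of_not_adj n_x1_x2
  have E_x2_x2 : W.adjMatrix x2 x2 = 0 := W.adjMatrix_diag x2
  have E_x2_x3 : W.adjMatrix x2 x3 = 0 := W.adjMatrix_of_not_adj n_x2_x3
  have E_x3_u : W.adjMatrix x3 u = W.w u x3 := by rw [W.adjMatrix_symm', W.adjMatrix_of_adj e_u_x3]
  have E_x3_v : W.adjMatrix x3 v = W.w x3 v := by rw [W.adjMatrix_of_adj e_x3_v]
  have E_x3_x1 : W.adjMatrix x3 x1 = 0 := by rw [W.adjMatrix_symm']; exact W.adjMatrix_of_not_adj n_x1_x3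
  have E_x3_x2 : W.adjMatrix x3 x2 = 0 := by rw [W.adjMatrix_symm']; exact W.adjMatrix_of_not_adj n_x2_x3
  have E_x3_x3 : W.adjMatrix x3 x3 = 0 := W.adjMatrix_diag x3
  have ha1 : W.w u x1 ≠ 0 := (W.pos u x1 e_u_x1).ne'
  apply rank_eq_two_of (a := u) (b := x1)
  · exact cols_indep W.adjMatrix_symm' W.adjMatrix_diag (by rw [E_u_x1]; exact ha1)
  · intro x
    rcases hall x with h | h | h | h | h <;> rw [h]
    · exact ⟨1, 0, fun i => by ring⟩
    · refine ⟨W.w x1 v / W.w u x1, 0, ?_⟩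
      intro i
      rcases hall i with h | h | h | h | h <;> rw [h] <;>
        simp only [E_u_u, E_u_v, E_u_x1, E_u_x2, E_u_x3, E_v_u, E_v_v, E_v_x1, E_v_x2, E_v_x3, E_x1_u, E_x1_v, E_x1_x1, E_x1_x2, E_x1_x3, E_x2_u, E_x2_v, E_x2_x1, E_x2_x2, E_x2_x3, E_x3_u, E_x3_v, E_x3_x1, E_x3_x2, E_x3_x3] <;> field_simp <;>
        first
          | ring1
          | linear_combination h2
          | linear_combination h3
          | linear_combination -h2
          | linear_combination -h3
          | linear_combination h2 * W.w x1 v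
          | linear_combination h3 * W.w x1 v
    · exact ⟨0, 1, fun i => by ring⟩
    · refine ⟨0, W.w u x2 / W.w u x1, ?_⟩
      intro i
      rcases hall i with h | h | h | h | h <;> rw [h] <;>
        simp only [E_u_u, E_u_v, E_u_x1, E_u_x2, E_u_x3, E_v_u, E_v_v, E_v_x1, E_v_x2, E_v_x3, E_x1_u, E_x1_v, E_x1_x1, E_x1_x2, E_x1_x3, E_x2_u, E_x2_v, E_x2_x1, E_x2_x2, E_x2_x3, E_x3_u, E_x3_v, E_x3_x1, E_x3_x2, E_x3_x3] <;> field_simp <;>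
        first
          | ring1
          | linear_combination h2
          | linear_combination h3
          | linear_combination -h2
          | linear_combination -h3
          | linear_combination h2 * W.w x1 v
          | linear_combination h3 * W.w x1 v
    · refine ⟨0, W.w u x3 / W.w u x1, ?_⟩
      intro i
      rcases hall i with h | h | h | h | h <;> rw [h] <;>
        simp only [E_u_u, E_u_v, E_u_x1, E_u_x2, E_u_x3, E_v_u, E_v_v, E_v_x1, E_v_x2, E_v_x3, E_x1_u, E_x1_v, E_x1_x1, E_x1_x2, E_x1_x3, E_x2_u, E_x2_v, E_x2_x1, E_x2_x2, E_x2_x3, E_x3_u, E_x3_v, E_x3_x1, E_x3_x2, E_x3_x3] <;> field_simp <;>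
        first
          | ring1
          | linear_combination h2
          | linear_combination h3
          | linear_combination -h2
          | linear_combination -h3
          | linear_combination h2 * W.w x1 v
          | linear_combination h3 * W.w x1 v

set_option maxHeartbeats 2000000 in
lemma forward_dir {V : Type*} [Fintype V] [DecidableEq V] (W : WeightedGraph V)
    (hbic : W.IsBicyclic) (hrk : W.adjMatrix.rank = 2) :
    ∃ u v x1 x2 x3 : V, Theta111Shape W u v x1 x2 x3 ∧
      W.w u x1 * W.w x2 v = W.w u x2 * W.w x1 v ∧
      W.w u x1 * W.w x3 v = W.w u x3 * W.w x1 v := by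
  classical
  obtain ⟨hconn, hcnt⟩ := hbic
  have hsym := W.adjMatrix_symm'
  have hdiag := W.adjMatrix_diag
  have hAne : ∀ {a b : V}, W.adjMatrix a b ≠ 0 ↔ W.G.Adj a b :=
    fun {a b} => W.adjMatrix_ne_zero_iff
  have hzero : ∀ a b : V, ¬ W.G.Adj a b → W.adjMatrix a b = 0 := fun a b h => by
    by_contra hh; exact h (hAne.mp hh)
  -- coefficients of any column w.r.t. the two columns of an edge
  have coeffs : ∀ a b x : V, W.G.Adj a b → ∃ c d : ℝ,
      W.adjMatrix b x = c * W.adjMatrix a b ∧ W.adjMatrix a x = d * W.adjMatrix a b ∧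
      ∀ i, W.adjMatrix i x = c * W.adjMatrix i a + d * W.adjMatrix i b := by
    intro a b x hab
    obtain ⟨c, d, h⟩ := exists_coeffs hrk (cols_indep hsym hdiag (hAne.mpr hab)) x
    refine ⟨c, d, ?_, ?_, h⟩
    · have hb := h b
      rw [hdiag b, mul_zero, add_zero, hsym b a] at hb
      exact hb
    · have ha := h a
      rw [hdiag a, mul_zero, zero_add] at ha
      exact ha
  -- triangle-free
  have tri : ∀ a b x : V, W.G.Adj a b → W.adjMatrix a x * W.adjMatrix b x = 0 := by
    intro a b x hab
    obtain ⟨c, d, hc, hd, h⟩ := coeffs a b x hab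
    have hx := h x
    rw [hdiag x, hsym x a, hsym x b] at hx
    have hab0 : W.adjMatrix a b ≠ 0 := hAne.mpr hab
    have key : W.adjMatrix a b * (W.adjMatrix a x * W.adjMatrix b x) = 0 := by
      linear_combination (-(W.adjMatrix a b)^2/2) * hx +
        (W.adjMatrix a b * W.adjMatrix a x/2) * hc +
        (W.adjMatrix a b * W.adjMatrix b x/2) * hd
    rcases mul_eq_zero.mp key with h' | h'
    · exact absurd h' hab0
    · exact h'
  -- a base edge
  obtain ⟨u0, v0, huv⟩ : ∃ a b : V, W.G.Adj a b := by
    have hpos : W.G.edgeSet.ncard ≠ 0 := by rw [hcnt]; omega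
    obtain ⟨e, he⟩ := Set.nonempty_of_ncard_ne_zero hpos
    revert he
    exact Sym2.ind (fun a b he => ⟨a, b, W.G.mem_edgeSet.mp he⟩) e
  have hA0 : W.adjMatrix u0 v0 ≠ 0 := hAne.mpr huv
  -- every vertex has a neighbour
  have hnbr : ∀ x : V, ∃ y, W.G.Adj x y := by
    intro x
    by_cases hx : x = u0
    · subst hx; exact ⟨v0, huv⟩
    · obtain ⟨w⟩ := hconn.preconnected x u0
      cases w with
      | nil => exact absurd rfl hx
      | cons h p => exact ⟨_, h⟩
  have hdisj : ∀ x : V, ¬ (W.G.Adj x u0 ∧ W.G.Adj x v0) := by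
    rintro x ⟨h1, h2⟩
    rcases mul_eq_zero.mp (tri u0 v0 x huv) with h | h
    · exact hAne.mpr h1.symm h
    · exact hAne.mpr h2.symm h
  have hcover : ∀ x : V, W.G.Adj x u0 ∨ W.G.Adj x v0 := by
    intro x
    by_contra hcon
    push_neg at hcon
    obtain ⟨hxu, hxv⟩ := hcon
    obtain ⟨y, hy⟩ := hnbr x
    obtain ⟨c, d, hc, hd, h⟩ := coeffs u0 v0 x huv
    have h1 : W.adjMatrix v0 x = 0 := hzero v0 x (fun hh => hxv hh.symm)
    have h2 : W.adjMatrix u0 x = 0 := hzero u0 x (fun hh => hxu hh.symm)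
    rw [h1] at hc; rw [h2] at hd
    have hc0 : c = 0 := by
      rcases mul_eq_zero.mp hc.symm with h' | h'
      · exact h'
      · exact absurd h' hA0
    have hd0 : d = 0 := by
      rcases mul_eq_zero.mp hd.symm with h' | h'
      · exact h'
      · exact absurd h' hA0
    have := h y
    rw [hc0, hd0, zero_mul, zero_mul, add_zero] at this
    exact hAne.mpr hy.symm this
  -- complete bipartite structure
  have hbip : ∀ x y : V, W.G.Adj x y ↔
      ((W.G.Adj x u0 ∧ W.G.Adj y v0) ∨ (W.G.Adj x v0 ∧ W.G.Adj y u0)) := by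
    intro x y
    obtain ⟨c, d, hc, hd, h⟩ := coeffs u0 v0 y huv
    constructor
    · intro hxy
      rcases hcover x with hxu | hxv
      · refine Or.inl ⟨hxu, ?_⟩
        have hxv0 : W.adjMatrix x v0 = 0 := hzero x v0 (fun hh => hdisj x ⟨hxu, hh⟩)
        have hxA := h x
        rw [hxv0, mul_zero, add_zero] at hxA
        have hcne : c ≠ 0 := by
          rintro rfl
          rw [zero_mul] at hxA
          exact hAne.mpr hxy hxA
        have : W.adjMatrix v0 y ≠ 0 := by rw [hc]; exact mul_ne_zero hcne hA0
        exact (hAne.mp this).symm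
      · refine Or.inr ⟨hxv, ?_⟩
        have hxu0 : W.adjMatrix x u0 = 0 := hzero x u0 (fun hh => hdisj x ⟨hh, hxv⟩)
        have hxA := h x
        rw [hxu0, mul_zero, zero_add] at hxA
        have hdne : d ≠ 0 := by
          rintro rfl
          rw [zero_mul] at hxA
          exact hAne.mpr hxy hxA
        have : W.adjMatrix u0 y ≠ 0 := by rw [hd]; exact mul_ne_zero hdne hA0
        exact (hAne.mp this).symm
    · rintro (⟨hxu, hyv⟩ | ⟨hxv, hyu⟩)
      · have hyu0 : W.adjMatrix u0 y = 0 := hzero u0 y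
          (fun hh => hdisj y ⟨hh.symm, hyv⟩)
        have hd0 : d = 0 := by
          rcases mul_eq_zero.mp (hyu0 ▸ hd).symm with h' | h'
          · exact h'
          · exact absurd h' hA0
        have hxA := h x
        rw [hd0, zero_mul, add_zero] at hxA
        have hcne : c ≠ 0 := by
          rintro rfl
          rw [zero_mul] at hc
          exact hAne.mpr hyv.symm hc
        have : W.adjMatrix x y ≠ 0 := by
          rw [hxA, hsym x u0]
          exact mul_ne_zero hcne (hAne.mpr hxu.symm)
        exact hAne.mp this
      · have hyv0 : W.adjMatrix v0 y = 0 := hzero v0 y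
          (fun hh => hdisj y ⟨hyu, hh.symm⟩)
        have hc0 : c = 0 := by
          rcases mul_eq_zero.mp (hyv0 ▸ hc).symm with h' | h'
          · exact h'
          · exact absurd h' hA0
        have hxA := h x
        rw [hc0, zero_mul, zero_add] at hxA
        have hdne : d ≠ 0 := by
          rintro rfl
          rw [zero_mul] at hd
          exact hAne.mpr hyu.symm hd
        have : W.adjMatrix x y ≠ 0 := by
          rw [hxA, hsym x v0]
          exact mul_ne_zero hdne (hAne.mpr hxv.symm)
        exact hAne.mp this
  -- the two parts as finsets
  set Pf : Finset V := Finset.univ.filter (fun x => W.G.Adj x v0) with hPdef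
  set Qf : Finset V := Finset.univ.filter (fun x => W.G.Adj x u0) with hQdef
  have hPfmem : ∀ x, x ∈ Pf ↔ W.G.Adj x v0 := fun x => by simp [hPdef]
  have hQfmem : ∀ x, x ∈ Qf ↔ W.G.Adj x u0 := fun x => by simp [hQdef]
  have hQc : Qf = Pfᶜ := by
    ext x
    rw [hQfmem, Finset.mem_compl, hPfmem]
    constructor
    · intro h1 h2; exact hdisj x ⟨h1, h2⟩
    · intro h1; rcases hcover x with h | h
      · exact h
      · exact absurd h h1
  have hcards : Pf.card + Qf.card = Fintype.card V := by
    rw [hQc]; exact Finset.card_add_card_compl Pf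
  have hdegP : ∀ x ∈ Pf, W.G.degree x = Qf.card := by
    intro x hx
    have hxv : W.G.Adj x v0 := (hPfmem x).mp hx
    have hxu : ¬ W.G.Adj x u0 := fun hh => hdisj x ⟨hh, hxv⟩
    have hnb : W.G.neighborFinset x = Qf := by
      ext y
      rw [SimpleGraph.mem_neighborFinset, hQfmem, hbip]
      constructor
      · rintro (⟨h1, _⟩ | ⟨_, h2⟩)
        · exact absurd h1 hxu
        · exact h2
      · intro h; exact Or.inr ⟨hxv, h⟩
    rw [← SimpleGraph.card_neighborFinset_eq_degree, hnb]
  have hdegQ : ∀ x ∈ Qf, W.G.degree x = Pf.card := by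
    intro x hx
    have hxu : W.G.Adj x u0 := (hQfmem x).mp hx
    have hxv : ¬ W.G.Adj x v0 := fun hh => hdisj x ⟨hxu, hh⟩
    have hnb : W.G.neighborFinset x = Pf := by
      ext y
      rw [SimpleGraph.mem_neighborFinset, hPfmem, hbip]
      constructor
      · rintro (⟨_, h1⟩ | ⟨h2, _⟩)
        · exact h1
        · exact absurd h2 hxv
      · intro h; exact Or.inl ⟨hxu, h⟩
    rw [← SimpleGraph.card_neighborFinset_eq_degree, hnb]
  -- handshake and counting
  have hEcard : W.G.edgeFinset.card = Fintype.card V + 1 := by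
    rw [SimpleGraph.edgeFinset_card, ← Nat.card_eq_fintype_card, Nat.card_coe_set_eq, hcnt]
  have hsum : ∑ x, W.G.degree x = 2 * (Fintype.card V + 1) := by
    rw [SimpleGraph.sum_degrees_eq_twice_card_edges, hEcard]
  have hdisjf : Disjoint Pf Qf := by rw [hQc]; exact disjoint_compl_right
  have hunion : Pf ∪ Qf = Finset.univ := by rw [hQc]; exact Finset.union_compl Pf
  have hsum2 : ∑ x, W.G.degree x = Pf.card * Qf.card + Qf.card * Pf.card := by
    rw [← hunion, Finset.sum_union hdisjf]
    congr 1
    · rw [Finset.sum_congr rfl hdegP, Finset.sum_const, smul_eq_mul]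
    · rw [Finset.sum_congr rfl hdegQ, Finset.sum_const, smul_eq_mul]
  have hmk : Pf.card * Qf.card = Pf.card + Qf.card + 1 := by
    have h1 := hsum.symm.trans hsum2
    rw [Nat.mul_comm Qf.card Pf.card, ← hcards] at h1
    set t := Pf.card * Qf.card with ht
    omega
  have hm1 : 1 ≤ Pf.card := Finset.card_pos.mpr ⟨u0, (hPfmem u0).mpr huv⟩
  have hk1 : 1 ≤ Qf.card := Finset.card_pos.mpr ⟨v0, (hQfmem v0).mpr huv.symm⟩
  have hsol : (Pf.card = 2 ∧ Qf.card = 3) ∨ (Pf.card = 3 ∧ Qf.card = 2) := by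
    obtain ⟨m', hm'⟩ : ∃ m', Pf.card = m' + 1 := ⟨Pf.card - 1, by omega⟩
    obtain ⟨k', hk'⟩ : ∃ k', Qf.card = k' + 1 := ⟨Qf.card - 1, by omega⟩
    rw [hm', hk'] at hmk
    have h2 : m' * k' = 2 := by ring_nf at hmk ⊢; linarith
    have hm2 : m' ≤ 2 := Nat.le_of_dvd (by norm_num) ⟨k', h2.symm⟩
    interval_cases m' <;> omega
  -- final construction
  have finish : ∀ S T : Finset V, S.card = 2 → T.card = 3 →
      (∀ x y : V, W.G.Adj x y ↔ ((x ∈ S ∧ y ∈ T) ∨ (x ∈ T ∧ y ∈ S))) →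
      (∀ x : V, x ∈ S ∨ x ∈ T) → (∀ x : V, ¬(x ∈ S ∧ x ∈ T)) →
      ∃ u v x1 x2 x3 : V, Theta111Shape W u v x1 x2 x3 ∧
        W.w u x1 * W.w x2 v = W.w u x2 * W.w x1 v ∧
        W.w u x1 * W.w x3 v = W.w u x3 * W.w x1 v := by
    intro S T hS hT hadj hcov hdis
    obtain ⟨a, b, hab, rfl⟩ := Finset.card_eq_two.mp hS
    obtain ⟨c, d, e, hcd, hce, hde, rfl⟩ := Finset.card_eq_three.mp hT
    have haT : ∀ z, z ∈ ({c, d, e} : Finset V) → a ≠ z := by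
      intro z hz h'
      exact hdis a ⟨by simp, h' ▸ hz⟩
    have hbT : ∀ z, z ∈ ({c, d, e} : Finset V) → b ≠ z := by
      intro z hz h'
      exact hdis b ⟨by simp, h' ▸ hz⟩
    have hac' : a ≠ c := haT c (by simp)
    have had' : a ≠ d := haT d (by simp)
    have hae' : a ≠ e := haT e (by simp)
    have hbc' : b ≠ c := hbT c (by simp)
    have hbd' : b ≠ d := hbT d (by simp)
    have hbe' : b ≠ e := hbT e (by simp)
    -- adjacency facts
    have hadj' : ∀ x y : V, W.G.Adj x y ↔
        (((x = a ∨ x = b) ∧ (y = c ∨ y = d ∨ y = e)) ∨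
         ((x = c ∨ x = d ∨ x = e) ∧ (y = a ∨ y = b))) := by
      intro x y
      rw [hadj x y]
      simp [Finset.mem_insert, Finset.mem_singleton]
    have hAac : W.G.Adj a c := (hadj' a c).mpr (by simp)
    have hAad : W.G.Adj a d := (hadj' a d).mpr (by simp)
    have hAae : W.G.Adj a e := (hadj' a e).mpr (by simp)
    have hAcb : W.G.Adj c b := (hadj' c b).mpr (by simp)
    have hAdb : W.G.Adj d b := (hadj' d b).mpr (by simp)
    have hAeb : W.G.Adj e b := (hadj' e b).mpr (by simp)
    have hnab : ¬ W.G.Adj b a := by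
      rw [hadj' b a]
      rintro (⟨_, h2 | h2 | h2⟩ | ⟨h1 | h1 | h1, _⟩)
      exacts [hac' h2, had' h2, hae' h2, hbc' h1, hbd' h1, hbe' h1]
    -- the weight relation for a vertex z in the 3-part
    have wrel : ∀ z : V, W.G.Adj a z → W.G.Adj z b →
        W.adjMatrix a z * W.adjMatrix b c = W.adjMatrix b z * W.adjMatrix a c := by
      intro z haz hzb
      obtain ⟨α, β, h1, h2, h⟩ := coeffs a c z hAac
      have hb := h b
      have hba : W.adjMatrix b a = 0 := hzero b a hnab
      rw [hba, mul_zero, zero_add] at hb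
      linear_combination (W.adjMatrix b c) * h2 - (W.adjMatrix a c) * hb
    refine ⟨a, b, c, d, e, ⟨?_, ?_, ?_⟩, ?_, ?_⟩
    · simp [hab, hac', had', hae', hbc', hbd', hbe', hcd, hce, hde]
    · intro z
      have hz := hcov z
      simp only [Finset.mem_insert, Finset.mem_singleton] at hz
      simp only [List.mem_cons, List.not_mem_nil, or_false, List.mem_singleton]
      tauto
    · intro s t
      rw [hadj' s t]
      simp only [List.mem_cons, List.not_mem_nil, or_false, List.mem_singleton, Prod.mk.injEq]
      constructor
      · rintro (⟨rfl | rfl, rfl | rfl | rfl⟩ | ⟨rfl | rfl | rfl, rfl | rfl⟩) <;> simp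
      · rintro ((⟨rfl, rfl⟩ | ⟨rfl, rfl⟩ | ⟨rfl, rfl⟩ | ⟨rfl, rfl⟩ | ⟨rfl, rfl⟩ | ⟨rfl, rfl⟩) |
          (⟨rfl, rfl⟩ | ⟨rfl, rfl⟩ | ⟨rfl, rfl⟩ | ⟨rfl, rfl⟩ | ⟨rfl, rfl⟩ | ⟨rfl, rfl⟩)) <;> simp
    · -- W.w a c * W.w d b = W.w a d * W.w c b
      have key := wrel d hAad hAdb
      rw [W.adjMatrix_of_adj hAad, W.adjMatrix_of_adj hAac,
        W.adjMatrix_of_adj (hAcb.symm), W.adjMatrix_of_adj (hAdb.symm)] at key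
      rw [W.symm c b, W.symm d b]
      linear_combination - key
    · have key := wrel e hAae hAeb
      rw [W.adjMatrix_of_adj hAae, W.adjMatrix_of_adj hAac,
        W.adjMatrix_of_adj (hAcb.symm), W.adjMatrix_of_adj (hAeb.symm)] at key
      rw [W.symm c b, W.symm e b]
      linear_combination - key
  rcases hsol with ⟨hm, hk⟩ | ⟨hm, hk⟩
  · refine finish Pf Qf hm hk ?_ ?_ ?_
    · intro x y
      rw [hbip x y]
      simp only [hPfmem, hQfmem]
      exact or_comm
    · intro x
      rw [hPfmem, hQfmem]
      exact (hcover x).symm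
    · rintro x ⟨h1, h2⟩
      exact hdisj x ⟨(hQfmem x).mp h2, (hPfmem x).mp h1⟩
  · refine finish Qf Pf hk hm ?_ ?_ ?_
    · intro x y
      rw [hbip x y]
      simp only [hPfmem, hQfmem]
    · intro x
      rw [hPfmem, hQfmem]
      exact hcover x
    · rintro x ⟨h1, h2⟩
      exact hdisj x ⟨(hQfmem x).mp h1, (hPfmem x).mp h2⟩

/-- the weighted bicyclic graphs of rank `2`. -/
theorem stmt11 {V : Type*} [Fintype V] [DecidableEq V] (W : WeightedGraph V)
    (hbic : W.IsBicyclic) :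
    W.adjMatrix.rank = 2 ↔
      (∃ u v x1 x2 x3 : V, Theta111Shape W u v x1 x2 x3 ∧
        W.w u x1 * W.w x2 v = W.w u x2 * W.w x1 v ∧
        W.w u x1 * W.w x3 v = W.w u x3 * W.w x1 v) := by
  constructor
  · exact fun h => forward_dir W hbic h
  · rintro ⟨u, v, x1, x2, x3, hsh, h2, h3⟩
    exact backward_dir W hsh h2 h3
end
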